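/- Let γ ∈ [0, 1/2), α ∈ (1/2, 1], M ≥ 0, C_g ≥ 0, C* ≥ 0, and let g : [0,1] → ℝ satisfy |g(s)| ≤ M and |g(s₁) − g(s₂)| ≤ C_g |s₁ − s₂|^α for all s, s₁, s₂ ∈ [0,1]. Let λ_{0,0} ∈ ℝ with |λ_{0,0}| ≤ C*, and let (λ_{j,k})_{j∈ℕ, 0 ≤ k ≤ 2^j−1} be real numbers with |λ_{j,k}| ≤ C* √(1 + j) for all j, k. For J ∈ ℕ and t ∈ [0,1], define S_J(t) = λ_{0,0} ∫₀^t g(s) φ_{0,0}(s) ds + Σ_{j=0}^{J} Σ_{k=0}^{2^j − 1} λ_{j,k} ∫₀^t g(s) ψ_{j,k}(s) ds. Then there exist a function S ∈ C^γ([0,1]) and a constant D > 0, depending only on M, C_g, C*, γ and α, such that S_J → S in C^γ([0,1]) as J → ∞ and, for all J ∈ ℕ, ‖S − S_J‖_{C^γ([0,1])} ≤ D · 2^{−J min(1/2 − γ, α − 1/2)} √(1 + J). -/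

import Mathlib

open MeasureTheory Set

/-- The Haar scaling function `φ_{J,l} = 2^{J/2} 𝟙_{[l/2^J,(l+1)/2^J)}`. -/
noncomputable def haarPhi (J l : ℕ) (s : ℝ) : ℝ :=
  2 ^ ((J : ℝ) / 2) *
    (Set.Ico ((l : ℝ) / 2 ^ J) (((l : ℝ) + 1) / 2 ^ J)).indicator 1 s

/-- The Haar wavelet `ψ_{j,k} = 2^{j/2} (𝟙_{[k/2^j,(2k+1)/2^{j+1})} − 𝟙_{[(2k+1)/2^{j+1},(k+1)/2^j)})`. -/
noncomputable def haarPsi (j k : ℕ) (s : ℝ) : ℝ :=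
  2 ^ ((j : ℝ) / 2) *
    ((Set.Ico ((k : ℝ) / 2 ^ j) ((2 * (k : ℝ) + 1) / 2 ^ (j + 1))).indicator 1 s -
      (Set.Ico ((2 * (k : ℝ) + 1) / 2 ^ (j + 1)) (((k : ℝ) + 1) / 2 ^ j)).indicator 1 s)

/-- The partial sum `S_J(t) = λ_{0,0} ∫₀^t g φ_{0,0} + Σ_{j=0}^{J} Σ_{k=0}^{2^j−1} λ_{j,k} ∫₀^t g ψ_{j,k}`. -/
noncomputable def haarPartialSum (g : ℝ → ℝ) (lam00 : ℝ) (lam : ℕ → ℕ → ℝ)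
    (J : ℕ) (t : ℝ) : ℝ :=
  lam00 * (∫ s in (0 : ℝ)..t, g s * haarPhi 0 0 s) +
    ∑ j ∈ Finset.range (J + 1), ∑ k ∈ Finset.range (2 ^ j),
      lam j k * ∫ s in (0 : ℝ)..t, g s * haarPsi j k s

/-- The Hölder norm `‖u‖_{C^γ([0,1])} = sup_{[0,1]} |u| + sup_{0 ≤ t₁ < t₂ ≤ 1} |u(t₁) − u(t₂)|/(t₂ − t₁)^γ`. -/
noncomputable def holderNorm (γ : ℝ) (u : ℝ → ℝ) : ℝ :=
  sSup ((fun t => |u t|) '' Set.Icc (0 : ℝ) 1) +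
    sSup {q : ℝ | ∃ t₁ t₂ : ℝ, 0 ≤ t₁ ∧ t₁ < t₂ ∧ t₂ ≤ 1 ∧
      q = |u t₁ - u t₂| / (t₂ - t₁) ^ γ}

namespace St13

/-- left endpoint -/
noncomputable def pa (j k : ℕ) : ℝ := (k : ℝ) / 2 ^ j
/-- midpoint -/
noncomputable def pm (j k : ℕ) : ℝ := (2 * (k : ℝ) + 1) / 2 ^ (j + 1)
/-- right endpoint -/
noncomputable def pb (j k : ℕ) : ℝ := ((k : ℝ) + 1) / 2 ^ j
/-- clamp -/
noncomputable def cl (A B x : ℝ) : ℝ := max A (min x B)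

lemma cl_mono (A B : ℝ) : Monotone (cl A B) := fun x y h =>
  max_le_max le_rfl (min_le_min h le_rfl)

lemma cl_le {A B : ℝ} (x : ℝ) (hAB : A ≤ B) : cl A B x ≤ B :=
  max_le hAB (min_le_right _ _)

lemma le_cl (A B x : ℝ) : A ≤ cl A B x := le_max_left _ _

lemma cl_diff_nonneg {A B : ℝ} {x y : ℝ} (h : y ≤ x) : 0 ≤ cl A B x - cl A B y :=
  sub_nonneg.2 (cl_mono A B h)

lemma cl_diff_le {A B : ℝ} (hAB : A ≤ B) (x y : ℝ) : cl A B x - cl A B y ≤ B - A :=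
  sub_le_sub (cl_le x hAB) (le_cl A B y)

lemma sqrt_le_self' {x : ℝ} (h : 1 ≤ x) : Real.sqrt x ≤ x := by
  nlinarith [Real.sq_sqrt (by linarith : (0:ℝ) ≤ x), Real.sqrt_nonneg x]

lemma ae_off_singleton {P : ℝ → Prop} (c : ℝ) (h : ∀ x, x ≠ c → P x) :
    ∀ᵐ x : ℝ, P x := by
  refine MeasureTheory.ae_iff.2 (measure_mono_null ?_ (Real.volume_singleton (a := c)))
  intro x hx
  simp only [mem_setOf_eq] at hx
  by_contra hc
  exact hx (h x (by simpa using hc))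

section dyadic

variable {j k : ℕ}

lemma two_pow_pos : (0:ℝ) < 2 ^ j := by positivity

lemma pm_sub_pa : pm j k - pa j k = ((2:ℝ) ^ (j+1))⁻¹ := by
  unfold pa pm
  rw [pow_succ]
  field_simp
  ring

lemma pb_sub_pm : pb j k - pm j k = ((2:ℝ) ^ (j+1))⁻¹ := by
  unfold pb pm
  rw [pow_succ]
  field_simp
  ring

lemma pb_sub_pa : pb j k - pa j k = ((2:ℝ) ^ j)⁻¹ := by
  unfold pa pb
  field_simp
  ring

lemma pa_nonneg : 0 ≤ pa j k := by unfold pa; positivity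

lemma pa_le_pm : pa j k ≤ pm j k := by
  have := pm_sub_pa (j := j) (k := k); have : (0:ℝ) < ((2:ℝ)^(j+1))⁻¹ := by positivity
  linarith [pm_sub_pa (j := j) (k := k)]

lemma pm_le_pb : pm j k ≤ pb j k := by
  have : (0:ℝ) < ((2:ℝ)^(j+1))⁻¹ := by positivity
  linarith [pb_sub_pm (j := j) (k := k)]

lemma pa_le_pb : pa j k ≤ pb j k := le_trans pa_le_pm pm_le_pb

lemma pb_le_one (hk : k < 2 ^ j) : pb j k ≤ 1 := by
  unfold pb
  rw [div_le_one (by positivity)]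
  have : (k:ℝ) + 1 ≤ ((2^j : ℕ) : ℝ) := by exact_mod_cast Nat.succ_le_of_lt hk
  simpa using this

lemma pa_succ : pa j (k+1) = pb j k := by unfold pa pb; push_cast; ring

end dyadic

end St13

namespace St13

section gfacts

variable {α M Cg : ℝ} {g : ℝ → ℝ}

lemma cont_g (hα0 : 0 < α) (hCg : 0 ≤ Cg)
    (hg : ∀ s₁ ∈ Set.Icc (0 : ℝ) 1, ∀ s₂ ∈ Set.Icc (0 : ℝ) 1,
      |g s₁ - g s₂| ≤ Cg * |s₁ - s₂| ^ α) :
    ContinuousOn g (Icc 0 1) := by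
  intro x hx
  rw [Metric.continuousWithinAt_iff]
  intro ε hε
  refine ⟨(ε / (Cg + 1)) ^ α⁻¹, by positivity, ?_⟩
  intro y hy hyx
  have h1 : |g y - g x| ≤ Cg * |y - x| ^ α := hg y hy x hx
  have h2 : |y - x| ^ α < ((ε / (Cg + 1)) ^ α⁻¹) ^ α := by
    apply Real.rpow_lt_rpow (abs_nonneg _) _ hα0
    simpa [Real.dist_eq] using hyx
  rw [Real.rpow_inv_rpow (by positivity) (ne_of_gt hα0)] at h2
  rw [Real.dist_eq]
  have h3 : Cg * |y - x| ^ α ≤ Cg * (ε / (Cg + 1)) :=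
    mul_le_mul_of_nonneg_left h2.le hCg
  have hcc : Cg * (ε / (Cg + 1)) < ε := by
    have : (Cg + 1) * (ε / (Cg + 1)) = ε := by field_simp
    nlinarith [div_pos hε (show (0:ℝ) < Cg + 1 by linarith)]
  exact lt_of_le_of_lt (le_trans h1 h3) hcc

lemma intg (hα0 : 0 < α) (hCg : 0 ≤ Cg)
    (hg : ∀ s₁ ∈ Set.Icc (0 : ℝ) 1, ∀ s₂ ∈ Set.Icc (0 : ℝ) 1,
      |g s₁ - g s₂| ≤ Cg * |s₁ - s₂| ^ α) :
    IntegrableOn g (Icc (0:ℝ) 1) := (cont_g hα0 hCg hg).integrableOn_Icc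

end gfacts

section psifacts

variable {j k : ℕ} {α M Cg : ℝ} {g : ℝ → ℝ}

lemma psi_eq (g : ℝ → ℝ) (j k : ℕ) (s : ℝ) :
    g s * haarPsi j k s =
      2 ^ ((j:ℝ)/2) * ((Ico (pa j k) (pm j k)).indicator g s
        - (Ico (pm j k) (pb j k)).indicator g s) := by
  unfold haarPsi pa pm pb
  simp only [Set.indicator_apply, Pi.one_apply]
  split_ifs <;> ring

lemma sub_Icc (hk : k < 2 ^ j) : Ico (pa j k) (pb j k) ⊆ Icc (0:ℝ) 1 := fun s hs =>
  ⟨le_trans pa_nonneg hs.1, le_of_lt (lt_of_lt_of_le hs.2 (pb_le_one hk))⟩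

lemma sub_Icc1 (hk : k < 2 ^ j) : Ico (pa j k) (pm j k) ⊆ Icc (0:ℝ) 1 := fun s hs =>
  sub_Icc hk ⟨hs.1, lt_of_lt_of_le hs.2 pm_le_pb⟩

lemma sub_Icc2 (hk : k < 2 ^ j) : Ico (pm j k) (pb j k) ⊆ Icc (0:ℝ) 1 := fun s hs =>
  sub_Icc hk ⟨le_trans pa_le_pm hs.1, hs.2⟩

lemma integrable_f (hk : k < 2 ^ j) (hgi : IntegrableOn g (Icc (0:ℝ) 1)) :
    Integrable (fun s => g s * haarPsi j k s) := by
  have : (fun s => g s * haarPsi j k s) =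
      fun s => 2 ^ ((j:ℝ)/2) * ((Ico (pa j k) (pm j k)).indicator g s
        - (Ico (pm j k) (pb j k)).indicator g s) := funext (psi_eq g j k)
  rw [this]
  apply Integrable.const_mul
  exact ((hgi.mono_set (sub_Icc1 hk)).integrable_indicator measurableSet_Ico).sub
    ((hgi.mono_set (sub_Icc2 hk)).integrable_indicator measurableSet_Ico)

lemma ii_f (hk : k < 2 ^ j) (hgi : IntegrableOn g (Icc (0:ℝ) 1)) (t₁ t₂ : ℝ) :
    IntervalIntegrable (fun s => g s * haarPsi j k s) volume t₁ t₂ :=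
  (integrable_f hk hgi).intervalIntegrable

lemma bound_f (hk : k < 2 ^ j) (hM : 0 ≤ M) (hgb : ∀ s ∈ Set.Icc (0 : ℝ) 1, |g s| ≤ M)
    (s : ℝ) : |g s * haarPsi j k s| ≤ M * 2 ^ ((j:ℝ)/2) := by
  have h2 : (0:ℝ) ≤ 2 ^ ((j:ℝ)/2) := Real.rpow_nonneg (by norm_num) _
  rw [psi_eq]
  by_cases h1 : s ∈ Ico (pa j k) (pm j k)
  · have h2' : s ∉ Ico (pm j k) (pb j k) := fun h => absurd h1.2 (not_lt.2 h.1)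
    rw [Set.indicator_of_mem h1, Set.indicator_of_notMem h2']
    have hs : s ∈ Icc (0:ℝ) 1 := sub_Icc1 hk h1
    rw [sub_zero, abs_mul, abs_of_nonneg h2]
    rw [mul_comm M]
    exact mul_le_mul_of_nonneg_left (hgb s hs) h2
  · rw [Set.indicator_of_notMem h1]
    by_cases h2' : s ∈ Ico (pm j k) (pb j k)
    · rw [Set.indicator_of_mem h2']
      have hs : s ∈ Icc (0:ℝ) 1 := sub_Icc2 hk h2'
      rw [zero_sub, abs_mul, abs_neg, abs_of_nonneg h2, mul_comm M]
      exact mul_le_mul_of_nonneg_left (hgb s hs) h2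
    · rw [Set.indicator_of_notMem h2']
      simp only [sub_zero, mul_zero, sub_self, abs_zero]
      positivity

lemma zero_off (s : ℝ) (hs : s ∉ Ico (pa j k) (pb j k)) : g s * haarPsi j k s = 0 := by
  rw [psi_eq]
  have h1 : s ∉ Ico (pa j k) (pm j k) := fun h => hs ⟨h.1, lt_of_lt_of_le h.2 pm_le_pb⟩
  have h2 : s ∉ Ico (pm j k) (pb j k) := fun h => hs ⟨le_trans pa_le_pm h.1, h.2⟩
  rw [Set.indicator_of_notMem h1, Set.indicator_of_notMem h2, sub_zero, mul_zero]

lemma int_zero_left (t₁ t₂ : ℝ) (h : t₂ ≤ pa j k) (h12 : t₁ ≤ t₂) :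
    ∫ s in t₁..t₂, g s * haarPsi j k s = 0 := by
  rw [intervalIntegral.integral_congr_ae (g := fun _ => (0:ℝ))
    (ae_off_singleton (pa j k) ?_)]
  · simp
  · intro x hx hmem
    rw [Set.uIoc_of_le h12] at hmem
    refine zero_off x (fun hmem2 => ?_)
    have := hmem2.1
    have := hmem.2
    exact hx (le_antisymm (le_trans hmem.2 h) hmem2.1 ▸ rfl)

lemma int_zero_right (t₁ t₂ : ℝ) (h : pb j k ≤ t₁) (h12 : t₁ ≤ t₂) :
    ∫ s in t₁..t₂, g s * haarPsi j k s = 0 := by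
  rw [intervalIntegral.integral_congr (g := fun _ => (0:ℝ)) ?_]
  · simp
  · intro x hx
    rw [Set.uIcc_of_le h12] at hx
    exact zero_off x (fun hmem => absurd hmem.2 (not_lt.2 (le_trans h hx.1)))

lemma int_bound (hk : k < 2 ^ j) (hM : 0 ≤ M)
    (hgb : ∀ s ∈ Set.Icc (0 : ℝ) 1, |g s| ≤ M) (t₁ t₂ : ℝ) (h12 : t₁ ≤ t₂) :
    |∫ s in t₁..t₂, g s * haarPsi j k s| ≤ M * 2 ^ ((j:ℝ)/2) * (t₂ - t₁) := by
  have := intervalIntegral.norm_integral_le_of_norm_le_const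
    (C := M * 2 ^ ((j:ℝ)/2)) (f := fun s => g s * haarPsi j k s) (a := t₁) (b := t₂)
    (fun x _ => by rw [Real.norm_eq_abs]; exact bound_f hk hM hgb x)
  rw [Real.norm_eq_abs, abs_of_nonneg (sub_nonneg.2 h12)] at this
  exact this

end psifacts

end St13

namespace St13

section fullbound

variable {j k : ℕ} {α M Cg : ℝ} {g : ℝ → ℝ}

lemma full_bound (hk : k < 2 ^ j) (hα0 : 0 < α) (hCg : 0 ≤ Cg)
    (hgc : ContinuousOn g (Icc (0:ℝ) 1))
    (hg : ∀ s₁ ∈ Set.Icc (0 : ℝ) 1, ∀ s₂ ∈ Set.Icc (0 : ℝ) 1,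
      |g s₁ - g s₂| ≤ Cg * |s₁ - s₂| ^ α) :
    |∫ s in (pa j k)..(pb j k), g s * haarPsi j k s| ≤
      2 ^ ((j:ℝ)/2) * (Cg * (((2:ℝ) ^ (j+1))⁻¹) ^ α * ((2:ℝ) ^ (j+1))⁻¹) := by
  set a := pa j k with ha
  set m := pm j k with hm
  set b := pb j k with hb
  set h : ℝ := ((2:ℝ) ^ (j+1))⁻¹ with hh
  have hgi : IntegrableOn g (Icc (0:ℝ) 1) := hgc.integrableOn_Icc
  have hma : m - a = h := pm_sub_pa
  have hbm : b - m = h := pb_sub_pm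
  have hpos : (0:ℝ) < h := by rw [hh]; positivity
  have ham : a ≤ m := pa_le_pm
  have hmb : m ≤ b := pm_le_pb
  have h0a : 0 ≤ a := pa_nonneg
  have hb1 : b ≤ 1 := pb_le_one hk
  -- integrability of g on subintervals
  have hgam : IntervalIntegrable g volume a m := by
    apply ContinuousOn.intervalIntegrable
    apply hgc.mono
    rw [Set.uIcc_of_le ham]
    exact fun s hs => ⟨le_trans h0a hs.1, le_trans hs.2 (le_trans hmb hb1)⟩
  have hgmb : IntervalIntegrable g volume m b := by
    apply ContinuousOn.intervalIntegrable
    apply hgc.mono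
    rw [Set.uIcc_of_le hmb]
    exact fun s hs => ⟨le_trans h0a (le_trans ham hs.1), le_trans hs.2 hb1⟩
  have hgsh : IntervalIntegrable (fun s => g (s + h)) volume a m := by
    have := hgmb.comp_add_right h
    have e1 : m - h = a := by linarith
    have e2 : b - h = m := by linarith
    rwa [e1, e2] at this
  -- split the integral
  have hsplit : ∫ s in a..b, g s * haarPsi j k s =
      (∫ s in a..m, g s * haarPsi j k s) + ∫ s in m..b, g s * haarPsi j k s :=
    (intervalIntegral.integral_add_adjacent_intervals (ii_f hk hgi a m)
      (ii_f hk hgi m b)).symm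
  -- left piece
  have hleft : ∫ s in a..m, g s * haarPsi j k s = 2 ^ ((j:ℝ)/2) * ∫ s in a..m, g s := by
    rw [← intervalIntegral.integral_const_mul]
    apply intervalIntegral.integral_congr_ae
    apply ae_off_singleton m
    intro x hx hmem
    rw [Set.uIoc_of_le ham] at hmem
    have hx1 : x ∈ Ico a m := ⟨le_of_lt hmem.1, lt_of_le_of_ne hmem.2 hx⟩
    have hx2 : x ∉ Ico m b := fun hc => absurd hx1.2 (not_lt.2 hc.1)
    rw [psi_eq, Set.indicator_of_mem hx1, Set.indicator_of_notMem hx2, sub_zero]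
  -- right piece
  have hright : ∫ s in m..b, g s * haarPsi j k s = -(2 ^ ((j:ℝ)/2) * ∫ s in m..b, g s) := by
    rw [← intervalIntegral.integral_const_mul, ← intervalIntegral.integral_neg]
    apply intervalIntegral.integral_congr_ae
    apply ae_off_singleton b
    intro x hx hmem
    rw [Set.uIoc_of_le hmb] at hmem
    have hx2 : x ∈ Ico m b := ⟨le_of_lt hmem.1, lt_of_le_of_ne hmem.2 hx⟩
    have hx1 : x ∉ Ico a m := fun hc => absurd hc.2 (not_lt.2 hx2.1)
    rw [psi_eq, Set.indicator_of_notMem hx1, Set.indicator_of_mem hx2, zero_sub]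
    ring
  -- change of variables
  have hshift : ∫ s in m..b, g s = ∫ s in a..m, g (s + h) := by
    have := intervalIntegral.integral_comp_add_right (a := a) (b := m) g h
    have e1 : a + h = m := by linarith
    have e2 : m + h = b := by linarith
    rw [e1, e2] at this
    exact this.symm
  have hcomb : ∫ s in a..b, g s * haarPsi j k s =
      2 ^ ((j:ℝ)/2) * ∫ s in a..m, (g s - g (s + h)) := by
    rw [hsplit, hleft, hright, hshift, intervalIntegral.integral_sub hgam hgsh]
    ring
  rw [hcomb, abs_mul, abs_of_nonneg (Real.rpow_nonneg (by norm_num) _)]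
  apply mul_le_mul_of_nonneg_left _ (Real.rpow_nonneg (by norm_num) _)
  have hbnd := intervalIntegral.norm_integral_le_of_norm_le_const
    (C := Cg * h ^ α) (f := fun s => g s - g (s + h)) (a := a) (b := m) ?_
  · rw [Real.norm_eq_abs, abs_of_nonneg (by linarith : (0:ℝ) ≤ m - a)] at hbnd
    calc |∫ s in a..m, (g s - g (s + h))| ≤ Cg * h ^ α * (m - a) := hbnd
      _ = Cg * h ^ α * h := by rw [hma]
  · intro x hx
    rw [Set.uIoc_of_le ham] at hx
    have hx01 : x ∈ Icc (0:ℝ) 1 := ⟨le_trans h0a (le_of_lt hx.1), le_trans hx.2 (le_trans hmb hb1)⟩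
    have hxh01 : x + h ∈ Icc (0:ℝ) 1 := by
      constructor
      · linarith [hx01.1, hpos.le]
      · have : x + h ≤ m + h := by linarith [hx.2]
        linarith
    have := hg x hx01 (x + h) hxh01
    rw [Real.norm_eq_abs]
    calc |g x - g (x + h)| ≤ Cg * |x - (x + h)| ^ α := this
      _ = Cg * h ^ α := by
          congr 2
          rw [show x - (x + h) = -h by ring, abs_neg, abs_of_nonneg hpos.le]

end fullbound

end St13

namespace St13

section master

variable {j k : ℕ} {α M Cg : ℝ} {g : ℝ → ℝ}

lemma master (hk : k < 2 ^ j) (hα0 : 0 < α) (hCg : 0 ≤ Cg) (hM : 0 ≤ M)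
    (hgc : ContinuousOn g (Icc (0:ℝ) 1))
    (hgb : ∀ s ∈ Set.Icc (0 : ℝ) 1, |g s| ≤ M)
    (hg : ∀ s₁ ∈ Set.Icc (0 : ℝ) 1, ∀ s₂ ∈ Set.Icc (0 : ℝ) 1,
      |g s₁ - g s₂| ≤ Cg * |s₁ - s₂| ^ α)
    (t₁ t₂ : ℝ) (h0 : 0 ≤ t₁) (h12 : t₁ ≤ t₂) (h21 : t₂ ≤ 1) :
    |∫ s in t₁..t₂, g s * haarPsi j k s| ≤
      2 ^ ((j:ℝ)/2) * (Cg * (((2:ℝ) ^ (j+1))⁻¹) ^ α * ((2:ℝ) ^ (j+1))⁻¹) * 2 ^ j *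
        (cl t₁ t₂ (pb j k) - cl t₁ t₂ (pa j k))
      + M * 2 ^ ((j:ℝ)/2) *
        ((cl (t₁ - min (t₂ - t₁) (((2:ℝ) ^ j)⁻¹)) (t₁ + min (t₂ - t₁) (((2:ℝ) ^ j)⁻¹)) (pb j k)
            - cl (t₁ - min (t₂ - t₁) (((2:ℝ) ^ j)⁻¹)) (t₁ + min (t₂ - t₁) (((2:ℝ) ^ j)⁻¹)) (pa j k))
          + (cl (t₂ - min (t₂ - t₁) (((2:ℝ) ^ j)⁻¹)) (t₂ + min (t₂ - t₁) (((2:ℝ) ^ j)⁻¹)) (pb j k)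
            - cl (t₂ - min (t₂ - t₁) (((2:ℝ) ^ j)⁻¹)) (t₂ + min (t₂ - t₁) (((2:ℝ) ^ j)⁻¹)) (pa j k))) := by
  have hgi : IntegrableOn g (Icc (0:ℝ) 1) := hgc.integrableOn_Icc
  set a := pa j k with ha
  set b := pb j k with hb
  set dd := min (t₂ - t₁) (((2:ℝ) ^ j)⁻¹) with hdd
  set Mq := M * 2 ^ ((j:ℝ)/2) with hMq
  set Cq := 2 ^ ((j:ℝ)/2) * (Cg * (((2:ℝ) ^ (j+1))⁻¹) ^ α * ((2:ℝ) ^ (j+1))⁻¹) with hCq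
  have hdelta : b - a = ((2:ℝ) ^ j)⁻¹ := pb_sub_pa
  have hdeltapos : (0:ℝ) < ((2:ℝ) ^ j)⁻¹ := by positivity
  have hab : a ≤ b := pa_le_pb
  have hdd0 : 0 ≤ dd := le_min (by linarith) hdeltapos.le
  have hMq0 : 0 ≤ Mq := mul_nonneg hM (Real.rpow_nonneg (by norm_num) _)
  have hCq0 : 0 ≤ Cq := by
    apply mul_nonneg (Real.rpow_nonneg (by norm_num) _)
    have : (0:ℝ) ≤ (((2:ℝ) ^ (j+1))⁻¹) ^ α := Real.rpow_nonneg (by positivity) _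
    positivity
  have hGd0 : 0 ≤ cl t₁ t₂ b - cl t₁ t₂ a := cl_diff_nonneg hab
  have hF1d0 : 0 ≤ cl (t₁ - dd) (t₁ + dd) b - cl (t₁ - dd) (t₁ + dd) a := cl_diff_nonneg hab
  have hF2d0 : 0 ≤ cl (t₂ - dd) (t₂ + dd) b - cl (t₂ - dd) (t₂ + dd) a := cl_diff_nonneg hab
  have hT10 : 0 ≤ Cq * 2 ^ j * (cl t₁ t₂ b - cl t₁ t₂ a) := by
    apply mul_nonneg (mul_nonneg hCq0 (by positivity)) hGd0
  have hT20 : 0 ≤ Mq * ((cl (t₁ - dd) (t₁ + dd) b - cl (t₁ - dd) (t₁ + dd) a)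
      + (cl (t₂ - dd) (t₂ + dd) b - cl (t₂ - dd) (t₂ + dd) a)) :=
    mul_nonneg hMq0 (add_nonneg hF1d0 hF2d0)
  rcases le_or_gt t₂ a with hA | hA
  · rw [int_zero_left t₁ t₂ hA h12]
    simpa using add_nonneg hT10 hT20
  rcases le_or_gt b t₁ with hB | hB
  · rw [int_zero_right t₁ t₂ hB h12]
    simpa using add_nonneg hT10 hT20
  rcases le_or_gt t₁ a with h1a | h1a
  · rcases le_or_gt b t₂ with hb2 | hb2
    · -- full interval inside [t₁, t₂]
      have e1 : ∫ s in t₁..t₂, g s * haarPsi j k s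
          = (∫ s in t₁..a, g s * haarPsi j k s) + ∫ s in a..t₂, g s * haarPsi j k s :=
        (intervalIntegral.integral_add_adjacent_intervals (ii_f hk hgi t₁ a)
          (ii_f hk hgi a t₂)).symm
      have e2 : ∫ s in a..t₂, g s * haarPsi j k s
          = (∫ s in a..b, g s * haarPsi j k s) + ∫ s in b..t₂, g s * haarPsi j k s :=
        (intervalIntegral.integral_add_adjacent_intervals (ii_f hk hgi a b)
          (ii_f hk hgi b t₂)).symm
      have e : ∫ s in t₁..t₂, g s * haarPsi j k s = ∫ s in a..b, g s * haarPsi j k s := by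
        rw [e1, e2, int_zero_left t₁ a le_rfl h1a, int_zero_right b t₂ le_rfl hb2]
        ring
      have hclb : cl t₁ t₂ b = b := by
        unfold cl
        rw [min_eq_left hb2, max_eq_right (le_trans h1a hab)]
      have hcla : cl t₁ t₂ a = a := by
        unfold cl
        rw [min_eq_left (le_trans hab hb2), max_eq_right h1a]
      have hfull : |∫ s in a..b, g s * haarPsi j k s| ≤ Cq := full_bound hk hα0 hCg hgc hg
      have heq : Cq * 2 ^ j * (cl t₁ t₂ b - cl t₁ t₂ a) = Cq := by
        rw [hclb, hcla, hdelta]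
        rw [mul_assoc, mul_inv_cancel₀ (ne_of_gt (two_pow_pos (j := j))), mul_one]
      rw [e]
      calc |∫ s in a..b, g s * haarPsi j k s| ≤ Cq := hfull
        _ = Cq * 2 ^ j * (cl t₁ t₂ b - cl t₁ t₂ a) := heq.symm
        _ ≤ _ := le_add_of_nonneg_right hT20
    · -- t₁ ≤ a < t₂ < b : straddles t₂
      have e1 : ∫ s in t₁..t₂, g s * haarPsi j k s
          = (∫ s in t₁..a, g s * haarPsi j k s) + ∫ s in a..t₂, g s * haarPsi j k s :=
        (intervalIntegral.integral_add_adjacent_intervals (ii_f hk hgi t₁ a)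
          (ii_f hk hgi a t₂)).symm
      have e : ∫ s in t₁..t₂, g s * haarPsi j k s = ∫ s in a..t₂, g s * haarPsi j k s := by
        rw [e1, int_zero_left t₁ a le_rfl h1a, zero_add]
      have hbd : |∫ s in a..t₂, g s * haarPsi j k s| ≤ Mq * (t₂ - a) :=
        int_bound hk hM hgb a t₂ hA.le
      have hkey : t₂ - a ≤ dd := le_min (by linarith) (by linarith)
      have hF2 : t₂ - a ≤ cl (t₂ - dd) (t₂ + dd) b - cl (t₂ - dd) (t₂ + dd) a := by
        have h1 : t₂ ≤ cl (t₂ - dd) (t₂ + dd) b :=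
          le_trans (le_min hb2.le (by linarith)) (le_max_right _ _)
        have h2 : cl (t₂ - dd) (t₂ + dd) a ≤ a :=
          max_le (by linarith) (min_le_left _ _)
        linarith
      rw [e]
      calc |∫ s in a..t₂, g s * haarPsi j k s| ≤ Mq * (t₂ - a) := hbd
        _ ≤ Mq * ((cl (t₁ - dd) (t₁ + dd) b - cl (t₁ - dd) (t₁ + dd) a)
            + (cl (t₂ - dd) (t₂ + dd) b - cl (t₂ - dd) (t₂ + dd) a)) := by
          apply mul_le_mul_of_nonneg_left _ hMq0
          linarith
        _ ≤ _ := le_add_of_nonneg_left hT10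
  · rcases le_or_gt b t₂ with hb2 | hb2
    · -- a < t₁ < b ≤ t₂ : straddles t₁
      have e1 : ∫ s in t₁..t₂, g s * haarPsi j k s
          = (∫ s in t₁..b, g s * haarPsi j k s) + ∫ s in b..t₂, g s * haarPsi j k s :=
        (intervalIntegral.integral_add_adjacent_intervals (ii_f hk hgi t₁ b)
          (ii_f hk hgi b t₂)).symm
      have e : ∫ s in t₁..t₂, g s * haarPsi j k s = ∫ s in t₁..b, g s * haarPsi j k s := by
        rw [e1, int_zero_right b t₂ le_rfl hb2, add_zero]
      have hbd : |∫ s in t₁..b, g s * haarPsi j k s| ≤ Mq * (b - t₁) :=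
        int_bound hk hM hgb t₁ b hB.le
      have hkey : b - t₁ ≤ dd := le_min (by linarith) (by linarith)
      have hF1 : b - t₁ ≤ cl (t₁ - dd) (t₁ + dd) b - cl (t₁ - dd) (t₁ + dd) a := by
        have h1 : b ≤ cl (t₁ - dd) (t₁ + dd) b :=
          le_trans (le_min le_rfl (by linarith)) (le_max_right _ _)
        have h2 : cl (t₁ - dd) (t₁ + dd) a ≤ t₁ :=
          max_le (by linarith) (le_trans (min_le_left _ _) h1a.le)
        linarith
      rw [e]
      calc |∫ s in t₁..b, g s * haarPsi j k s| ≤ Mq * (b - t₁) := hbd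
        _ ≤ Mq * ((cl (t₁ - dd) (t₁ + dd) b - cl (t₁ - dd) (t₁ + dd) a)
            + (cl (t₂ - dd) (t₂ + dd) b - cl (t₂ - dd) (t₂ + dd) a)) := by
          apply mul_le_mul_of_nonneg_left _ hMq0
          linarith
        _ ≤ _ := le_add_of_nonneg_left hT10
    · -- a < t₁ ≤ t₂ < b : inside
      have hbd : |∫ s in t₁..t₂, g s * haarPsi j k s| ≤ Mq * (t₂ - t₁) :=
        int_bound hk hM hgb t₁ t₂ h12
      have hkey : t₂ - t₁ ≤ dd := le_min le_rfl (by linarith)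
      have hF1 : t₂ - t₁ ≤ cl (t₁ - dd) (t₁ + dd) b - cl (t₁ - dd) (t₁ + dd) a := by
        have h1 : t₂ ≤ cl (t₁ - dd) (t₁ + dd) b :=
          le_trans (le_min hb2.le (by linarith)) (le_max_right _ _)
        have h2 : cl (t₁ - dd) (t₁ + dd) a ≤ t₁ :=
          max_le (by linarith) (le_trans (min_le_left _ _) h1a.le)
        linarith
      calc |∫ s in t₁..t₂, g s * haarPsi j k s| ≤ Mq * (t₂ - t₁) := hbd
        _ ≤ Mq * ((cl (t₁ - dd) (t₁ + dd) b - cl (t₁ - dd) (t₁ + dd) a)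
            + (cl (t₂ - dd) (t₂ + dd) b - cl (t₂ - dd) (t₂ + dd) a)) := by
          apply mul_le_mul_of_nonneg_left _ hMq0
          linarith
        _ ≤ _ := le_add_of_nonneg_left hT10

end master

end St13

namespace St13

/-- level `j` part of the Haar series -/
noncomputable def lvl (g : ℝ → ℝ) (lam : ℕ → ℕ → ℝ) (j : ℕ) (t : ℝ) : ℝ :=
  ∑ k ∈ Finset.range (2 ^ j), lam j k * ∫ s in (0:ℝ)..t, g s * haarPsi j k s

section lvlsec

variable {j : ℕ} {α M Cg Cstar : ℝ} {g : ℝ → ℝ} {lam : ℕ → ℕ → ℝ}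

lemma telescope (A B : ℝ) (hAB : A ≤ B) (j : ℕ) :
    ∑ k ∈ Finset.range (2 ^ j), (cl A B (pb j k) - cl A B (pa j k)) ≤ B - A := by
  have e : ∀ k ∈ Finset.range (2 ^ j),
      cl A B (pb j k) - cl A B (pa j k)
        = (fun k => cl A B (pa j k)) (k + 1) - (fun k => cl A B (pa j k)) k := by
    intro k _
    simp only
    rw [pa_succ]
  rw [Finset.sum_congr rfl e, Finset.sum_range_sub (fun k => cl A B (pa j k))]
  exact cl_diff_le hAB _ _

lemma lvl_diff_bound (hα0 : 0 < α) (hCg : 0 ≤ Cg) (hM : 0 ≤ M) (hCstar : 0 ≤ Cstar)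
    (hgc : ContinuousOn g (Icc (0:ℝ) 1))
    (hgb : ∀ s ∈ Set.Icc (0 : ℝ) 1, |g s| ≤ M)
    (hg : ∀ s₁ ∈ Set.Icc (0 : ℝ) 1, ∀ s₂ ∈ Set.Icc (0 : ℝ) 1,
      |g s₁ - g s₂| ≤ Cg * |s₁ - s₂| ^ α)
    (hlam : ∀ j k : ℕ, k < 2 ^ j → |lam j k| ≤ Cstar * Real.sqrt (1 + (j : ℝ)))
    (t₁ t₂ : ℝ) (h0 : 0 ≤ t₁) (h12 : t₁ ≤ t₂) (h21 : t₂ ≤ 1) :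
    |lvl g lam j t₂ - lvl g lam j t₁| ≤ Cstar * Real.sqrt (1 + (j:ℝ)) *
      (2 ^ ((j:ℝ)/2) * (Cg * (((2:ℝ) ^ (j+1))⁻¹) ^ α * ((2:ℝ) ^ (j+1))⁻¹) * 2 ^ j * (t₂ - t₁)
        + M * 2 ^ ((j:ℝ)/2) * (4 * min (t₂ - t₁) (((2:ℝ) ^ j)⁻¹))) := by
  have hgi : IntegrableOn g (Icc (0:ℝ) 1) := hgc.integrableOn_Icc
  set dd := min (t₂ - t₁) (((2:ℝ) ^ j)⁻¹) with hdd
  set Mq := M * 2 ^ ((j:ℝ)/2) with hMq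
  set Cq := 2 ^ ((j:ℝ)/2) * (Cg * (((2:ℝ) ^ (j+1))⁻¹) ^ α * ((2:ℝ) ^ (j+1))⁻¹) with hCq
  have hdeltapos : (0:ℝ) < ((2:ℝ) ^ j)⁻¹ := by positivity
  have hdd0 : 0 ≤ dd := le_min (by linarith) hdeltapos.le
  have hMq0 : 0 ≤ Mq := mul_nonneg hM (Real.rpow_nonneg (by norm_num) _)
  have hCq0 : 0 ≤ Cq := by
    apply mul_nonneg (Real.rpow_nonneg (by norm_num) _)
    have : (0:ℝ) ≤ (((2:ℝ) ^ (j+1))⁻¹) ^ α := Real.rpow_nonneg (by positivity) _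
    positivity
  have hCs : 0 ≤ Cstar * Real.sqrt (1 + (j:ℝ)) := mul_nonneg hCstar (Real.sqrt_nonneg _)
  have hdiff : lvl g lam j t₂ - lvl g lam j t₁
      = ∑ k ∈ Finset.range (2 ^ j), lam j k * ∫ s in t₁..t₂, g s * haarPsi j k s := by
    unfold lvl
    rw [← Finset.sum_sub_distrib]
    apply Finset.sum_congr rfl
    intro k _
    rw [← mul_sub, intervalIntegral.integral_interval_sub_left (ii_f (by
      exact Finset.mem_range.1 ‹k ∈ Finset.range (2 ^ j)›) hgi 0 t₂) (ii_f (by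
      exact Finset.mem_range.1 ‹k ∈ Finset.range (2 ^ j)›) hgi 0 t₁)]
  rw [hdiff]
  calc |∑ k ∈ Finset.range (2 ^ j), lam j k * ∫ s in t₁..t₂, g s * haarPsi j k s|
      ≤ ∑ k ∈ Finset.range (2 ^ j), |lam j k * ∫ s in t₁..t₂, g s * haarPsi j k s| :=
        Finset.abs_sum_le_sum_abs _ _
    _ ≤ ∑ k ∈ Finset.range (2 ^ j), Cstar * Real.sqrt (1 + (j:ℝ)) *
          (Cq * 2 ^ j * (cl t₁ t₂ (pb j k) - cl t₁ t₂ (pa j k))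
            + Mq * ((cl (t₁ - dd) (t₁ + dd) (pb j k) - cl (t₁ - dd) (t₁ + dd) (pa j k))
              + (cl (t₂ - dd) (t₂ + dd) (pb j k) - cl (t₂ - dd) (t₂ + dd) (pa j k)))) := by
        apply Finset.sum_le_sum
        intro k hkmem
        have hk : k < 2 ^ j := Finset.mem_range.1 hkmem
        rw [abs_mul]
        exact mul_le_mul (hlam j k hk)
          (master hk hα0 hCg hM hgc hgb hg t₁ t₂ h0 h12 h21) (abs_nonneg _) hCs
    _ ≤ Cstar * Real.sqrt (1 + (j:ℝ)) * (Cq * 2 ^ j * (t₂ - t₁) + Mq * (4 * dd)) := by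
        rw [← Finset.mul_sum]
        apply mul_le_mul_of_nonneg_left _ hCs
        rw [Finset.sum_add_distrib, ← Finset.mul_sum, ← Finset.mul_sum]
        have hG := telescope t₁ t₂ h12 j
        have hF1 := telescope (t₁ - dd) (t₁ + dd) (by linarith) j
        have hF2 := telescope (t₂ - dd) (t₂ + dd) (by linarith) j
        have hsumF : ∑ k ∈ Finset.range (2 ^ j),
            ((cl (t₁ - dd) (t₁ + dd) (pb j k) - cl (t₁ - dd) (t₁ + dd) (pa j k))
              + (cl (t₂ - dd) (t₂ + dd) (pb j k) - cl (t₂ - dd) (t₂ + dd) (pa j k)))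
            ≤ 4 * dd := by
          rw [Finset.sum_add_distrib]
          have e1 : t₁ + dd - (t₁ - dd) = 2 * dd := by ring
          have e2 : t₂ + dd - (t₂ - dd) = 2 * dd := by ring
          rw [e1] at hF1; rw [e2] at hF2
          linarith
        have t1 : Cq * 2 ^ j *
            (∑ k ∈ Finset.range (2 ^ j), (cl t₁ t₂ (pb j k) - cl t₁ t₂ (pa j k)))
            ≤ Cq * 2 ^ j * (t₂ - t₁) :=
          mul_le_mul_of_nonneg_left hG (by positivity)
        have t2 : Mq * (∑ k ∈ Finset.range (2 ^ j),
            ((cl (t₁ - dd) (t₁ + dd) (pb j k) - cl (t₁ - dd) (t₁ + dd) (pa j k))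
              + (cl (t₂ - dd) (t₂ + dd) (pb j k) - cl (t₂ - dd) (t₂ + dd) (pa j k))))
            ≤ Mq * (4 * dd) := mul_le_mul_of_nonneg_left hsumF hMq0
        rw [Finset.sum_add_distrib] at t2 ⊢
        linarith

end lvlsec

end St13

namespace St13

/-- the decay exponent -/
noncomputable def th (γ α : ℝ) : ℝ := min (1/2 - γ) (α - 1/2)

section powers

variable {γ α : ℝ} {j : ℕ}

lemma rpow2_mono {E F : ℝ} (h : E ≤ F) : (2:ℝ) ^ E ≤ (2:ℝ) ^ F :=
  Real.rpow_le_rpow_of_exponent_le one_le_two h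

lemma c0 (j : ℕ) : ((2:ℝ) ^ j)⁻¹ = (2:ℝ) ^ (-(j:ℝ)) := by
  rw [← Real.rpow_natCast 2 j, ← Real.rpow_neg (by norm_num)]

lemma c1 (j : ℕ) : ((2:ℝ) ^ (j+1))⁻¹ = (2:ℝ) ^ (-((j:ℝ)+1)) := by
  rw [← Real.rpow_natCast 2 (j+1), ← Real.rpow_neg (by norm_num)]
  push_cast
  ring_nf

lemma th_le_1 (hγ0 : 0 ≤ γ) (hα1 : α ≤ 1) : th γ α ≤ 1/2 := by
  unfold th
  exact le_trans (min_le_right _ _) (by linarith)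

lemma pw1 (hγ0 : 0 ≤ γ) (hα0 : 1/2 < α) (hα1 : α ≤ 1) {Cg : ℝ} (hCg : 0 ≤ Cg) :
    2 ^ ((j:ℝ)/2) * (Cg * (((2:ℝ) ^ (j+1))⁻¹) ^ α * ((2:ℝ) ^ (j+1))⁻¹) * 2 ^ j
      ≤ Cg * (2:ℝ) ^ (-(j:ℝ) * th γ α) := by
  have e : 2 ^ ((j:ℝ)/2) * (Cg * (((2:ℝ) ^ (j+1))⁻¹) ^ α * ((2:ℝ) ^ (j+1))⁻¹) * 2 ^ j
      = Cg * (2:ℝ) ^ ((j:ℝ)/2 + (-((j:ℝ)+1)) * α + (-((j:ℝ)+1)) + (j:ℝ)) := by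
    rw [c1, ← Real.rpow_mul (by norm_num : (0:ℝ) ≤ 2) (-((j:ℝ)+1)) α,
      ← Real.rpow_natCast 2 j, Real.rpow_add (by norm_num : (0:ℝ) < 2),
      Real.rpow_add (by norm_num : (0:ℝ) < 2), Real.rpow_add (by norm_num : (0:ℝ) < 2)]
    ring
  rw [e]
  apply mul_le_mul_of_nonneg_left _ hCg
  apply rpow2_mono
  have hj0 : (0:ℝ) ≤ (j:ℝ) := Nat.cast_nonneg j
  have hθ : th γ α ≤ α - 1/2 := min_le_right _ _
  have hmul : (j:ℝ) * th γ α ≤ (j:ℝ) * (α - 1/2) := mul_le_mul_of_nonneg_left hθ hj0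
  nlinarith

lemma pw_sup (hγ0 : 0 ≤ γ) (hα0 : 1/2 < α) (hα1 : α ≤ 1) {t : ℝ} (ht : 0 ≤ t) :
    2 ^ ((j:ℝ)/2) * (4 * min t (((2:ℝ) ^ j)⁻¹)) ≤ 4 * (2:ℝ) ^ (-(j:ℝ) * th γ α) := by
  have h2 : (0:ℝ) ≤ 2 ^ ((j:ℝ)/2) := Real.rpow_nonneg (by norm_num) _
  have step1 : 2 ^ ((j:ℝ)/2) * (4 * min t (((2:ℝ) ^ j)⁻¹))
      ≤ 2 ^ ((j:ℝ)/2) * (4 * ((2:ℝ) ^ j)⁻¹) := by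
    apply mul_le_mul_of_nonneg_left _ h2
    have := min_le_right t (((2:ℝ) ^ j)⁻¹)
    linarith
  have step2 : 2 ^ ((j:ℝ)/2) * (4 * ((2:ℝ) ^ j)⁻¹) = 4 * (2:ℝ) ^ ((j:ℝ)/2 + -(j:ℝ)) := by
    rw [c0, Real.rpow_add (by norm_num : (0:ℝ) < 2)]
    ring
  have step3 : (2:ℝ) ^ ((j:ℝ)/2 + -(j:ℝ)) ≤ (2:ℝ) ^ (-(j:ℝ) * th γ α) := by
    apply rpow2_mono
    have hj0 : (0:ℝ) ≤ (j:ℝ) := Nat.cast_nonneg j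
    have hθ : th γ α ≤ 1/2 := th_le_1 hγ0 hα1
    have hmul : (j:ℝ) * th γ α ≤ (j:ℝ) * (1/2) := mul_le_mul_of_nonneg_left hθ hj0
    linarith
  calc 2 ^ ((j:ℝ)/2) * (4 * min t (((2:ℝ) ^ j)⁻¹))
      ≤ 4 * (2:ℝ) ^ ((j:ℝ)/2 + -(j:ℝ)) := by rw [← step2]; exact step1
    _ ≤ 4 * (2:ℝ) ^ (-(j:ℝ) * th γ α) := by linarith [step3]

lemma pw_hold (hγ0 : 0 ≤ γ) (hγ : γ < 1/2) (hα0 : 1/2 < α) (hα1 : α ≤ 1)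
    {Δ : ℝ} (hΔ0 : 0 < Δ) (hΔ1 : Δ ≤ 1) :
    2 ^ ((j:ℝ)/2) * (4 * min Δ (((2:ℝ) ^ j)⁻¹))
      ≤ 4 * (2:ℝ) ^ (-(j:ℝ) * th γ α) * Δ ^ γ := by
  have h2 : (0:ℝ) ≤ 2 ^ ((j:ℝ)/2) := Real.rpow_nonneg (by norm_num) _
  have hj0 : (0:ℝ) ≤ (j:ℝ) := Nat.cast_nonneg j
  have hθγ : th γ α ≤ 1/2 - γ := min_le_left _ _
  have hγΔ : (0:ℝ) ≤ Δ ^ γ := Real.rpow_nonneg hΔ0.le _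
  rcases le_total Δ (((2:ℝ) ^ j)⁻¹) with hc | hc
  · -- min = Δ
    rw [min_eq_left hc]
    have hΔsplit : Δ = Δ ^ (1 - γ) * Δ ^ γ := by
      rw [← Real.rpow_add hΔ0, sub_add_cancel, Real.rpow_one]
    have hΔle : Δ ^ (1 - γ) ≤ ((2:ℝ) ^ (-(j:ℝ))) ^ (1 - γ) := by
      apply Real.rpow_le_rpow hΔ0.le _ (by linarith)
      rw [← c0]; exact hc
    have hpow : (2:ℝ) ^ ((j:ℝ)/2) * ((2:ℝ) ^ (-(j:ℝ))) ^ (1 - γ)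
        ≤ (2:ℝ) ^ (-(j:ℝ) * th γ α) := by
      rw [← Real.rpow_mul (by norm_num : (0:ℝ) ≤ 2), ← Real.rpow_add (by norm_num : (0:ℝ) < 2)]
      apply rpow2_mono
      have hmul : (j:ℝ) * th γ α ≤ (j:ℝ) * (1/2 - γ) := mul_le_mul_of_nonneg_left hθγ hj0
      nlinarith
    calc 2 ^ ((j:ℝ)/2) * (4 * Δ) = 4 * (2 ^ ((j:ℝ)/2) * (Δ ^ (1-γ) * Δ ^ γ)) := by
          rw [← hΔsplit]; ring
      _ ≤ 4 * ((2:ℝ) ^ (-(j:ℝ) * th γ α) * Δ ^ γ) := by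
          have : 2 ^ ((j:ℝ)/2) * (Δ ^ (1-γ) * Δ ^ γ) ≤ (2:ℝ) ^ (-(j:ℝ) * th γ α) * Δ ^ γ := by
            have b1 : 2 ^ ((j:ℝ)/2) * Δ ^ (1-γ) ≤ 2 ^ ((j:ℝ)/2) * ((2:ℝ) ^ (-(j:ℝ))) ^ (1-γ) :=
              mul_le_mul_of_nonneg_left hΔle h2
            have b2 : 2 ^ ((j:ℝ)/2) * Δ ^ (1-γ) ≤ (2:ℝ) ^ (-(j:ℝ) * th γ α) :=
              le_trans b1 hpow
            calc 2 ^ ((j:ℝ)/2) * (Δ ^ (1-γ) * Δ ^ γ) = (2 ^ ((j:ℝ)/2) * Δ ^ (1-γ)) * Δ ^ γ := by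
                  ring
              _ ≤ (2:ℝ) ^ (-(j:ℝ) * th γ α) * Δ ^ γ := mul_le_mul_of_nonneg_right b2 hγΔ
          linarith
      _ = 4 * (2:ℝ) ^ (-(j:ℝ) * th γ α) * Δ ^ γ := by ring
  · -- min = 2^{-j}
    rw [min_eq_right hc]
    have e1 : (2:ℝ) ^ ((j:ℝ)/2) * (((2:ℝ) ^ j)⁻¹) = (2:ℝ) ^ ((j:ℝ)/2 + -(j:ℝ)) := by
      rw [c0, Real.rpow_add (by norm_num : (0:ℝ) < 2)]
    have hΔγ : ((2:ℝ) ^ (-(j:ℝ))) ^ γ ≤ Δ ^ γ := by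
      apply Real.rpow_le_rpow (Real.rpow_nonneg (by norm_num) _) _ hγ0
      rw [← c0]; exact hc
    have key : (2:ℝ) ^ ((j:ℝ)/2 + -(j:ℝ)) ≤ (2:ℝ) ^ (-(j:ℝ) * th γ α) * Δ ^ γ := by
      have b1 : (2:ℝ) ^ (-(j:ℝ) * th γ α) * Δ ^ γ
          ≥ (2:ℝ) ^ (-(j:ℝ) * th γ α) * ((2:ℝ) ^ (-(j:ℝ))) ^ γ :=
        mul_le_mul_of_nonneg_left hΔγ (Real.rpow_nonneg (by norm_num) _)
      have b2 : (2:ℝ) ^ (-(j:ℝ) * th γ α) * ((2:ℝ) ^ (-(j:ℝ))) ^ γ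
          = (2:ℝ) ^ (-(j:ℝ) * th γ α + (-(j:ℝ)) * γ) := by
        rw [← Real.rpow_mul (by norm_num : (0:ℝ) ≤ 2), ← Real.rpow_add (by norm_num : (0:ℝ) < 2)]
      have b3 : (2:ℝ) ^ ((j:ℝ)/2 + -(j:ℝ)) ≤ (2:ℝ) ^ (-(j:ℝ) * th γ α + (-(j:ℝ)) * γ) := by
        apply rpow2_mono
        have hmul : (j:ℝ) * th γ α ≤ (j:ℝ) * (1/2 - γ) := mul_le_mul_of_nonneg_left hθγ hj0
        nlinarith
      rw [b2] at b1
      linarith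
    calc 2 ^ ((j:ℝ)/2) * (4 * ((2:ℝ) ^ j)⁻¹) = 4 * ((2:ℝ) ^ ((j:ℝ)/2) * ((2:ℝ) ^ j)⁻¹) := by ring
      _ = 4 * (2:ℝ) ^ ((j:ℝ)/2 + -(j:ℝ)) := by rw [e1]
      _ ≤ 4 * ((2:ℝ) ^ (-(j:ℝ) * th γ α) * Δ ^ γ) := by linarith [key]
      _ = 4 * (2:ℝ) ^ (-(j:ℝ) * th γ α) * Δ ^ γ := by ring

end powers

end St13

namespace St13

/-- per-level bound -/
noncomputable def bdf (γ α M Cg Cstar : ℝ) (j : ℕ) : ℝ :=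
  Cstar * (Cg + 4 * M) * Real.sqrt (1 + (j:ℝ)) * ((2:ℝ) ^ (-(th γ α))) ^ j

section levelbounds

variable {γ α M Cg Cstar : ℝ} {g : ℝ → ℝ} {lam : ℕ → ℕ → ℝ} {j : ℕ}

lemma hr (γ α : ℝ) (j : ℕ) : ((2:ℝ) ^ (-(th γ α))) ^ j = (2:ℝ) ^ (-(j:ℝ) * th γ α) := by
  rw [← Real.rpow_natCast ((2:ℝ) ^ (-(th γ α))) j,
    ← Real.rpow_mul (by norm_num : (0:ℝ) ≤ 2)]
  ring_nf

lemma L1 (hγ0 : 0 ≤ γ) (hγ : γ < 1/2) (hα0 : 1/2 < α) (hα1 : α ≤ 1)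
    (hM : 0 ≤ M) (hCg : 0 ≤ Cg) (hCstar : 0 ≤ Cstar)
    (hgc : ContinuousOn g (Icc (0:ℝ) 1))
    (hgb : ∀ s ∈ Set.Icc (0 : ℝ) 1, |g s| ≤ M)
    (hg : ∀ s₁ ∈ Set.Icc (0 : ℝ) 1, ∀ s₂ ∈ Set.Icc (0 : ℝ) 1,
      |g s₁ - g s₂| ≤ Cg * |s₁ - s₂| ^ α)
    (hlam : ∀ j k : ℕ, k < 2 ^ j → |lam j k| ≤ Cstar * Real.sqrt (1 + (j : ℝ)))
    {t : ℝ} (ht : t ∈ Icc (0:ℝ) 1) :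
    |lvl g lam j t| ≤ bdf γ α M Cg Cstar j := by
  have hz : lvl g lam j 0 = 0 := by
    unfold lvl
    apply Finset.sum_eq_zero
    intro k _
    rw [intervalIntegral.integral_same, mul_zero]
  have hd := lvl_diff_bound (j := j) (by linarith : 0 < α) hCg hM hCstar hgc hgb hg hlam
    0 t le_rfl ht.1 ht.2
  rw [hz, sub_zero, sub_zero] at hd
  have hCs : 0 ≤ Cstar * Real.sqrt (1 + (j:ℝ)) := mul_nonneg hCstar (Real.sqrt_nonneg _)
  have hb1 : 2 ^ ((j:ℝ)/2) * (Cg * (((2:ℝ) ^ (j+1))⁻¹) ^ α * ((2:ℝ) ^ (j+1))⁻¹) * 2 ^ j * t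
      ≤ Cg * (2:ℝ) ^ (-(j:ℝ) * th γ α) := by
    have h1 := pw1 (j := j) hγ0 hα0 hα1 hCg
    have hnn : (0:ℝ) ≤ 2 ^ ((j:ℝ)/2) * (Cg * (((2:ℝ) ^ (j+1))⁻¹) ^ α * ((2:ℝ) ^ (j+1))⁻¹) * 2 ^ j := by
      have : (0:ℝ) ≤ (((2:ℝ) ^ (j+1))⁻¹) ^ α := Real.rpow_nonneg (by positivity) _
      have h2 : (0:ℝ) ≤ (2:ℝ) ^ ((j:ℝ)/2) := Real.rpow_nonneg (by norm_num) _
      positivity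
    nlinarith [ht.2, ht.1]
  have hb2 : M * 2 ^ ((j:ℝ)/2) * (4 * min t (((2:ℝ) ^ j)⁻¹))
      ≤ 4 * M * (2:ℝ) ^ (-(j:ℝ) * th γ α) := by
    have h1 := pw_sup (j := j) hγ0 hα0 hα1 ht.1
    calc M * 2 ^ ((j:ℝ)/2) * (4 * min t (((2:ℝ) ^ j)⁻¹))
        = M * (2 ^ ((j:ℝ)/2) * (4 * min t (((2:ℝ) ^ j)⁻¹))) := by ring
      _ ≤ M * (4 * (2:ℝ) ^ (-(j:ℝ) * th γ α)) := mul_le_mul_of_nonneg_left h1 hM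
      _ = 4 * M * (2:ℝ) ^ (-(j:ℝ) * th γ α) := by ring
  calc |lvl g lam j t| ≤ Cstar * Real.sqrt (1 + (j:ℝ)) *
        (2 ^ ((j:ℝ)/2) * (Cg * (((2:ℝ) ^ (j+1))⁻¹) ^ α * ((2:ℝ) ^ (j+1))⁻¹) * 2 ^ j * t
          + M * 2 ^ ((j:ℝ)/2) * (4 * min t (((2:ℝ) ^ j)⁻¹))) := hd
    _ ≤ Cstar * Real.sqrt (1 + (j:ℝ)) *
        ((Cg + 4 * M) * (2:ℝ) ^ (-(j:ℝ) * th γ α)) := by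
      apply mul_le_mul_of_nonneg_left _ hCs
      nlinarith
    _ = bdf γ α M Cg Cstar j := by unfold bdf; rw [hr]; ring

lemma L2 (hγ0 : 0 ≤ γ) (hγ : γ < 1/2) (hα0 : 1/2 < α) (hα1 : α ≤ 1)
    (hM : 0 ≤ M) (hCg : 0 ≤ Cg) (hCstar : 0 ≤ Cstar)
    (hgc : ContinuousOn g (Icc (0:ℝ) 1))
    (hgb : ∀ s ∈ Set.Icc (0 : ℝ) 1, |g s| ≤ M)
    (hg : ∀ s₁ ∈ Set.Icc (0 : ℝ) 1, ∀ s₂ ∈ Set.Icc (0 : ℝ) 1,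
      |g s₁ - g s₂| ≤ Cg * |s₁ - s₂| ^ α)
    (hlam : ∀ j k : ℕ, k < 2 ^ j → |lam j k| ≤ Cstar * Real.sqrt (1 + (j : ℝ)))
    {t₁ t₂ : ℝ} (h0 : 0 ≤ t₁) (h12 : t₁ < t₂) (h21 : t₂ ≤ 1) :
    |lvl g lam j t₂ - lvl g lam j t₁| ≤ bdf γ α M Cg Cstar j * (t₂ - t₁) ^ γ := by
  have hd := lvl_diff_bound (j := j) (by linarith : 0 < α) hCg hM hCstar hgc hgb hg hlam
    t₁ t₂ h0 h12.le h21
  have hCs : 0 ≤ Cstar * Real.sqrt (1 + (j:ℝ)) := mul_nonneg hCstar (Real.sqrt_nonneg _)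
  have hΔ0 : 0 < t₂ - t₁ := by linarith
  have hΔ1 : t₂ - t₁ ≤ 1 := by linarith
  have hγΔ : (0:ℝ) ≤ (t₂ - t₁) ^ γ := Real.rpow_nonneg hΔ0.le _
  have hΔle : t₂ - t₁ ≤ (t₂ - t₁) ^ γ := by
    have := Real.rpow_le_rpow_of_exponent_ge hΔ0 hΔ1 (le_of_lt (by linarith : γ < 1))
    rwa [Real.rpow_one] at this
  have hb1 : 2 ^ ((j:ℝ)/2) * (Cg * (((2:ℝ) ^ (j+1))⁻¹) ^ α * ((2:ℝ) ^ (j+1))⁻¹) * 2 ^ j * (t₂ - t₁)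
      ≤ Cg * (2:ℝ) ^ (-(j:ℝ) * th γ α) * (t₂ - t₁) ^ γ := by
    have h1 := pw1 (j := j) hγ0 hα0 hα1 hCg
    have hnn : (0:ℝ) ≤ 2 ^ ((j:ℝ)/2) * (Cg * (((2:ℝ) ^ (j+1))⁻¹) ^ α * ((2:ℝ) ^ (j+1))⁻¹) * 2 ^ j := by
      have : (0:ℝ) ≤ (((2:ℝ) ^ (j+1))⁻¹) ^ α := Real.rpow_nonneg (by positivity) _
      have h2 : (0:ℝ) ≤ (2:ℝ) ^ ((j:ℝ)/2) := Real.rpow_nonneg (by norm_num) _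
      positivity
    have s1 : 2 ^ ((j:ℝ)/2) * (Cg * (((2:ℝ) ^ (j+1))⁻¹) ^ α * ((2:ℝ) ^ (j+1))⁻¹) * 2 ^ j * (t₂ - t₁)
        ≤ Cg * (2:ℝ) ^ (-(j:ℝ) * th γ α) * (t₂ - t₁) :=
      mul_le_mul_of_nonneg_right h1 hΔ0.le
    have s2 : Cg * (2:ℝ) ^ (-(j:ℝ) * th γ α) * (t₂ - t₁)
        ≤ Cg * (2:ℝ) ^ (-(j:ℝ) * th γ α) * (t₂ - t₁) ^ γ := by
      apply mul_le_mul_of_nonneg_left hΔle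
      exact mul_nonneg hCg (Real.rpow_nonneg (by norm_num) _)
    linarith
  have hb2 : M * 2 ^ ((j:ℝ)/2) * (4 * min (t₂ - t₁) (((2:ℝ) ^ j)⁻¹))
      ≤ 4 * M * (2:ℝ) ^ (-(j:ℝ) * th γ α) * (t₂ - t₁) ^ γ := by
    have h1 := pw_hold (j := j) hγ0 hγ hα0 hα1 hΔ0 hΔ1
    calc M * 2 ^ ((j:ℝ)/2) * (4 * min (t₂ - t₁) (((2:ℝ) ^ j)⁻¹))
        = M * (2 ^ ((j:ℝ)/2) * (4 * min (t₂ - t₁) (((2:ℝ) ^ j)⁻¹))) := by ring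
      _ ≤ M * (4 * (2:ℝ) ^ (-(j:ℝ) * th γ α) * (t₂ - t₁) ^ γ) := mul_le_mul_of_nonneg_left h1 hM
      _ = 4 * M * (2:ℝ) ^ (-(j:ℝ) * th γ α) * (t₂ - t₁) ^ γ := by ring
  calc |lvl g lam j t₂ - lvl g lam j t₁|
      ≤ Cstar * Real.sqrt (1 + (j:ℝ)) *
        (2 ^ ((j:ℝ)/2) * (Cg * (((2:ℝ) ^ (j+1))⁻¹) ^ α * ((2:ℝ) ^ (j+1))⁻¹) * 2 ^ j * (t₂ - t₁)
          + M * 2 ^ ((j:ℝ)/2) * (4 * min (t₂ - t₁) (((2:ℝ) ^ j)⁻¹))) := hd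
    _ ≤ Cstar * Real.sqrt (1 + (j:ℝ)) *
        ((Cg + 4 * M) * ((2:ℝ) ^ (-(j:ℝ) * th γ α) * (t₂ - t₁) ^ γ)) := by
      apply mul_le_mul_of_nonneg_left _ hCs
      nlinarith
    _ = bdf γ α M Cg Cstar j * (t₂ - t₁) ^ γ := by unfold bdf; rw [hr]; ring

end levelbounds

end St13

namespace St13

section summability

variable {γ α M Cg Cstar : ℝ}

lemma r_pos (γ α : ℝ) : 0 < (2:ℝ) ^ (-(th γ α)) := Real.rpow_pos_of_pos (by norm_num) _

lemma r_lt_one (hγ0 : 0 ≤ γ) (hγ : γ < 1/2) (hα0 : 1/2 < α) :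
    (2:ℝ) ^ (-(th γ α)) < 1 := by
  apply Real.rpow_lt_one_of_one_lt_of_neg (by norm_num)
  have h1 : 0 < th γ α := lt_min (by linarith) (by linarith)
  linarith

lemma r_le_one (hγ0 : 0 ≤ γ) (hγ : γ < 1/2) (hα0 : 1/2 < α) :
    (2:ℝ) ^ (-(th γ α)) ≤ 1 := (r_lt_one hγ0 hγ hα0).le

lemma aux_summable (hγ0 : 0 ≤ γ) (hγ : γ < 1/2) (hα0 : 1/2 < α) (c : ℝ) :
    Summable (fun i : ℕ => c * (((i:ℝ) + 2) * ((2:ℝ) ^ (-(th γ α))) ^ i)) := by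
  apply Summable.mul_left
  have h1 : Summable (fun i : ℕ => (i:ℝ) ^ 1 * ((2:ℝ) ^ (-(th γ α))) ^ i) :=
    summable_pow_mul_geometric_of_norm_lt_one 1
      (by rw [Real.norm_eq_abs, abs_of_pos (r_pos γ α)]; exact r_lt_one hγ0 hγ hα0)
  have h2 : Summable (fun i : ℕ => (2:ℝ) * ((2:ℝ) ^ (-(th γ α))) ^ i) :=
    (summable_geometric_of_lt_one (r_pos γ α).le (r_lt_one hγ0 hγ hα0)).mul_left 2
  have := h1.add h2
  apply this.congr
  intro i
  simp only [pow_one]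
  ring

lemma bdf_nonneg (hM : 0 ≤ M) (hCg : 0 ≤ Cg) (hCstar : 0 ≤ Cstar) (j : ℕ) :
    0 ≤ bdf γ α M Cg Cstar j := by
  unfold bdf
  have := Real.sqrt_nonneg (1 + (j:ℝ))
  have := (r_pos γ α).le
  positivity

lemma bdf_summable (hγ0 : 0 ≤ γ) (hγ : γ < 1/2) (hα0 : 1/2 < α)
    (hM : 0 ≤ M) (hCg : 0 ≤ Cg) (hCstar : 0 ≤ Cstar) :
    Summable (bdf γ α M Cg Cstar) := by
  refine Summable.of_nonneg_of_le (bdf_nonneg hM hCg hCstar) (fun j => ?_)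
    (aux_summable hγ0 hγ hα0 (Cstar * (Cg + 4*M)))
  unfold bdf
  have hs : Real.sqrt (1 + (j:ℝ)) ≤ (j:ℝ) + 2 := by
    have h1 : (1:ℝ) ≤ 1 + (j:ℝ) := by linarith [Nat.cast_nonneg (α := ℝ) j]
    have := sqrt_le_self' h1
    linarith
  have hC : 0 ≤ Cstar * (Cg + 4*M) := by positivity
  have hrj : (0:ℝ) ≤ ((2:ℝ) ^ (-(th γ α))) ^ j := pow_nonneg (r_pos γ α).le j
  calc Cstar * (Cg + 4*M) * Real.sqrt (1 + (j:ℝ)) * ((2:ℝ) ^ (-(th γ α))) ^ j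
      ≤ Cstar * (Cg + 4*M) * ((j:ℝ) + 2) * ((2:ℝ) ^ (-(th γ α))) ^ j := by
        apply mul_le_mul_of_nonneg_right _ hrj
        exact mul_le_mul_of_nonneg_left hs hC
    _ = (Cstar * (Cg + 4*M)) * (((j:ℝ) + 2) * ((2:ℝ) ^ (-(th γ α))) ^ j) := by ring

/-- the tail-sum constant -/
noncomputable def CR (γ α : ℝ) : ℝ := ∑' i : ℕ, (((i:ℝ) + 2) * ((2:ℝ) ^ (-(th γ α))) ^ i)

lemma CR_nonneg (γ α : ℝ) : 0 ≤ CR γ α := by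
  apply tsum_nonneg
  intro i
  have := (r_pos γ α).le
  have : (0:ℝ) ≤ ((2:ℝ) ^ (-(th γ α))) ^ i := pow_nonneg (r_pos γ α).le i
  positivity

lemma bdf_shift_le (hγ0 : 0 ≤ γ) (hγ : γ < 1/2) (hα0 : 1/2 < α)
    (hM : 0 ≤ M) (hCg : 0 ≤ Cg) (hCstar : 0 ≤ Cstar) (J i : ℕ) :
    bdf γ α M Cg Cstar (i + (J+1)) ≤
      (Cstar * (Cg + 4*M) * Real.sqrt (1 + (J:ℝ)) * ((2:ℝ) ^ (-(th γ α))) ^ J) *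
        (((i:ℝ) + 2) * ((2:ℝ) ^ (-(th γ α))) ^ i) := by
  set r := (2:ℝ) ^ (-(th γ α)) with hrdef
  have hr0 : 0 ≤ r := (r_pos γ α).le
  have hr1 : r ≤ 1 := r_le_one hγ0 hγ hα0
  have hC : 0 ≤ Cstar * (Cg + 4*M) := by positivity
  unfold bdf
  rw [← hrdef]
  have hcast : (1:ℝ) + ((i + (J+1) : ℕ) : ℝ) = ((1:ℝ) + (J:ℝ)) + ((i:ℝ) + 1) := by
    push_cast; ring
  have hsqrt : Real.sqrt (1 + ((i + (J+1) : ℕ) : ℝ))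
      ≤ Real.sqrt (1 + (J:ℝ)) * ((i:ℝ) + 2) := by
    rw [hcast]
    have hJ0 : (0:ℝ) ≤ (J:ℝ) := Nat.cast_nonneg J
    have hi0 : (0:ℝ) ≤ (i:ℝ) := Nat.cast_nonneg i
    have h1 : (1:ℝ) + (J:ℝ) + ((i:ℝ) + 1) ≤ (1 + (J:ℝ)) * ((i:ℝ) + 2) := by nlinarith
    calc Real.sqrt ((1:ℝ) + (J:ℝ) + ((i:ℝ) + 1))
        ≤ Real.sqrt ((1 + (J:ℝ)) * ((i:ℝ) + 2)) := Real.sqrt_le_sqrt h1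
      _ = Real.sqrt (1 + (J:ℝ)) * Real.sqrt ((i:ℝ) + 2) := Real.sqrt_mul (by linarith) _
      _ ≤ Real.sqrt (1 + (J:ℝ)) * ((i:ℝ) + 2) := by
          apply mul_le_mul_of_nonneg_left _ (Real.sqrt_nonneg _)
          exact sqrt_le_self' (by linarith)
  have hpow : r ^ (i + (J+1)) ≤ r ^ J * r ^ i := by
    have : r ^ (i + (J+1)) = r ^ J * r ^ i * r := by rw [pow_add, pow_add]; ring
    rw [this]
    have h1 : 0 ≤ r ^ J * r ^ i := mul_nonneg (pow_nonneg hr0 _) (pow_nonneg hr0 _)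
    nlinarith
  calc Cstar * (Cg + 4*M) * Real.sqrt (1 + ((i + (J+1) : ℕ) : ℝ)) * r ^ (i + (J+1))
      ≤ Cstar * (Cg + 4*M) * (Real.sqrt (1 + (J:ℝ)) * ((i:ℝ) + 2)) * (r ^ J * r ^ i) := by
        apply mul_le_mul (mul_le_mul_of_nonneg_left hsqrt hC) hpow
          (pow_nonneg hr0 _)
        positivity
    _ = (Cstar * (Cg + 4*M) * Real.sqrt (1 + (J:ℝ)) * r ^ J) * (((i:ℝ) + 2) * r ^ i) := by
        ring

lemma tail_le (hγ0 : 0 ≤ γ) (hγ : γ < 1/2) (hα0 : 1/2 < α)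
    (hM : 0 ≤ M) (hCg : 0 ≤ Cg) (hCstar : 0 ≤ Cstar) (J : ℕ) :
    ∑' i : ℕ, bdf γ α M Cg Cstar (i + (J+1)) ≤
      (Cstar * (Cg + 4*M) * Real.sqrt (1 + (J:ℝ)) * ((2:ℝ) ^ (-(th γ α))) ^ J) * CR γ α := by
  have hsum1 : Summable (fun i : ℕ => bdf γ α M Cg Cstar (i + (J+1))) :=
    (summable_nat_add_iff (J+1)).2 (bdf_summable hγ0 hγ hα0 hM hCg hCstar)
  have hsum2 := aux_summable hγ0 hγ hα0
    (Cstar * (Cg + 4*M) * Real.sqrt (1 + (J:ℝ)) * ((2:ℝ) ^ (-(th γ α))) ^ J)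
  calc ∑' i : ℕ, bdf γ α M Cg Cstar (i + (J+1))
      ≤ ∑' i : ℕ, (Cstar * (Cg + 4*M) * Real.sqrt (1 + (J:ℝ)) * ((2:ℝ) ^ (-(th γ α))) ^ J) *
          (((i:ℝ) + 2) * ((2:ℝ) ^ (-(th γ α))) ^ i) :=
        Summable.tsum_le_tsum (fun i => bdf_shift_le hγ0 hγ hα0 hM hCg hCstar J i) hsum1 hsum2
    _ = _ := by rw [tsum_mul_left]; rfl

end summability

end St13

namespace St13

/-- primitive of `g φ_{0,0}` -/
noncomputable def Phi (g : ℝ → ℝ) (t : ℝ) : ℝ := ∫ s in (0:ℝ)..t, g s * haarPhi 0 0 s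

section phifacts

variable {M : ℝ} {g : ℝ → ℝ}

lemma phi_eq (g : ℝ → ℝ) (s : ℝ) :
    g s * haarPhi 0 0 s = (Ico (0:ℝ) 1).indicator g s := by
  unfold haarPhi
  norm_num
  simp only [Set.indicator_apply, Pi.one_apply]
  split_ifs <;> ring

lemma integrable_phi (hgi : IntegrableOn g (Icc (0:ℝ) 1)) :
    Integrable (fun s => g s * haarPhi 0 0 s) := by
  have : (fun s => g s * haarPhi 0 0 s) = (Ico (0:ℝ) 1).indicator g := funext (phi_eq g)
  rw [this]
  exact (hgi.mono_set Ico_subset_Icc_self).integrable_indicator measurableSet_Ico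

lemma bound_phi (hM : 0 ≤ M) (hgb : ∀ s ∈ Set.Icc (0 : ℝ) 1, |g s| ≤ M) (s : ℝ) :
    |g s * haarPhi 0 0 s| ≤ M := by
  rw [phi_eq]
  by_cases h : s ∈ Ico (0:ℝ) 1
  · rw [Set.indicator_of_mem h]
    exact hgb s ⟨h.1, h.2.le⟩
  · rw [Set.indicator_of_notMem h]
    simpa using hM

lemma phi_cont (hgi : IntegrableOn g (Icc (0:ℝ) 1)) : Continuous (Phi g) :=
  intervalIntegral.continuous_primitive
    (fun _ _ => (integrable_phi hgi).intervalIntegrable) 0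

lemma phi_lip (hM : 0 ≤ M) (hgb : ∀ s ∈ Set.Icc (0 : ℝ) 1, |g s| ≤ M)
    (hgi : IntegrableOn g (Icc (0:ℝ) 1))
    (t₁ t₂ : ℝ) (h12 : t₁ ≤ t₂) : |Phi g t₂ - Phi g t₁| ≤ M * (t₂ - t₁) := by
  unfold Phi
  rw [intervalIntegral.integral_interval_sub_left
    ((integrable_phi hgi).intervalIntegrable) ((integrable_phi hgi).intervalIntegrable)]
  have := intervalIntegral.norm_integral_le_of_norm_le_const (C := M)
    (f := fun s => g s * haarPhi 0 0 s) (a := t₁) (b := t₂)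
    (fun x _ => by rw [Real.norm_eq_abs]; exact bound_phi hM hgb x)
  rwa [Real.norm_eq_abs, abs_of_nonneg (sub_nonneg.2 h12)] at this

lemma lvl_cont {lam : ℕ → ℕ → ℝ} {j : ℕ} (hgi : IntegrableOn g (Icc (0:ℝ) 1)) :
    Continuous (lvl g lam j) := by
  unfold lvl
  apply continuous_finset_sum
  intro k hk
  exact continuous_const.mul (intervalIntegral.continuous_primitive
    (fun _ _ => ii_f (Finset.mem_range.1 hk) hgi _ _) 0)

end phifacts

end St13

namespace St13

section tails

variable {γ α M Cg Cstar : ℝ} {g : ℝ → ℝ} {lam : ℕ → ℕ → ℝ}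

lemma tail_abs (hγ0 : 0 ≤ γ) (hγ : γ < 1/2) (hα0 : 1/2 < α) (hα1 : α ≤ 1)
    (hM : 0 ≤ M) (hCg : 0 ≤ Cg) (hCstar : 0 ≤ Cstar)
    (hgc : ContinuousOn g (Icc (0:ℝ) 1))
    (hgb : ∀ s ∈ Set.Icc (0 : ℝ) 1, |g s| ≤ M)
    (hg : ∀ s₁ ∈ Set.Icc (0 : ℝ) 1, ∀ s₂ ∈ Set.Icc (0 : ℝ) 1,
      |g s₁ - g s₂| ≤ Cg * |s₁ - s₂| ^ α)
    (hlam : ∀ j k : ℕ, k < 2 ^ j → |lam j k| ≤ Cstar * Real.sqrt (1 + (j : ℝ)))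
    (J : ℕ) {t : ℝ} (ht : t ∈ Icc (0:ℝ) 1) :
    |∑' i : ℕ, lvl g lam (i + (J+1)) t| ≤
      (Cstar * (Cg + 4*M) * CR γ α) *
        (Real.sqrt (1 + (J:ℝ)) * ((2:ℝ) ^ (-(th γ α))) ^ J) := by
  have hbdshift : Summable (fun i => bdf γ α M Cg Cstar (i + (J+1))) :=
    (summable_nat_add_iff (J+1)).2 (bdf_summable hγ0 hγ hα0 hM hCg hCstar)
  have h1 : ∀ i : ℕ, ‖lvl g lam (i + (J+1)) t‖ ≤ bdf γ α M Cg Cstar (i + (J+1)) := fun i => by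
    rw [Real.norm_eq_abs]
    exact L1 hγ0 hγ hα0 hα1 hM hCg hCstar hgc hgb hg hlam ht
  have hsn : Summable (fun i => ‖lvl g lam (i + (J+1)) t‖) :=
    Summable.of_nonneg_of_le (fun i => norm_nonneg _) h1 hbdshift
  calc |∑' i : ℕ, lvl g lam (i + (J+1)) t|
      ≤ ∑' i : ℕ, ‖lvl g lam (i + (J+1)) t‖ := by
        rw [← Real.norm_eq_abs]; exact norm_tsum_le_tsum_norm hsn
    _ ≤ ∑' i : ℕ, bdf γ α M Cg Cstar (i + (J+1)) := Summable.tsum_le_tsum h1 hsn hbdshift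
    _ ≤ (Cstar * (Cg + 4*M) * Real.sqrt (1 + (J:ℝ)) * ((2:ℝ) ^ (-(th γ α))) ^ J) * CR γ α :=
        tail_le hγ0 hγ hα0 hM hCg hCstar J
    _ = _ := by ring

lemma tail_holder (hγ0 : 0 ≤ γ) (hγ : γ < 1/2) (hα0 : 1/2 < α) (hα1 : α ≤ 1)
    (hM : 0 ≤ M) (hCg : 0 ≤ Cg) (hCstar : 0 ≤ Cstar)
    (hgc : ContinuousOn g (Icc (0:ℝ) 1))
    (hgb : ∀ s ∈ Set.Icc (0 : ℝ) 1, |g s| ≤ M)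
    (hg : ∀ s₁ ∈ Set.Icc (0 : ℝ) 1, ∀ s₂ ∈ Set.Icc (0 : ℝ) 1,
      |g s₁ - g s₂| ≤ Cg * |s₁ - s₂| ^ α)
    (hlam : ∀ j k : ℕ, k < 2 ^ j → |lam j k| ≤ Cstar * Real.sqrt (1 + (j : ℝ)))
    (J : ℕ) {t₁ t₂ : ℝ} (h0 : 0 ≤ t₁) (h12 : t₁ < t₂) (h21 : t₂ ≤ 1) :
    |(∑' i : ℕ, lvl g lam (i + (J+1)) t₁) - ∑' i : ℕ, lvl g lam (i + (J+1)) t₂| ≤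
      (Cstar * (Cg + 4*M) * CR γ α) *
        (Real.sqrt (1 + (J:ℝ)) * ((2:ℝ) ^ (-(th γ α))) ^ J) * (t₂ - t₁) ^ γ := by
  have ht1 : t₁ ∈ Icc (0:ℝ) 1 := ⟨h0, by linarith⟩
  have ht2 : t₂ ∈ Icc (0:ℝ) 1 := ⟨by linarith, h21⟩
  have hγΔ : (0:ℝ) ≤ (t₂ - t₁) ^ γ := Real.rpow_nonneg (by linarith) _
  have hbdshift : Summable (fun i => bdf γ α M Cg Cstar (i + (J+1))) :=
    (summable_nat_add_iff (J+1)).2 (bdf_summable hγ0 hγ hα0 hM hCg hCstar)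
  have hs1 : Summable (fun i => lvl g lam (i + (J+1)) t₁) := by
    apply Summable.of_norm_bounded hbdshift
    intro i
    rw [Real.norm_eq_abs]
    exact L1 hγ0 hγ hα0 hα1 hM hCg hCstar hgc hgb hg hlam ht1
  have hs2 : Summable (fun i => lvl g lam (i + (J+1)) t₂) := by
    apply Summable.of_norm_bounded hbdshift
    intro i
    rw [Real.norm_eq_abs]
    exact L1 hγ0 hγ hα0 hα1 hM hCg hCstar hgc hgb hg hlam ht2
  have hsub : (∑' i : ℕ, lvl g lam (i + (J+1)) t₁) - ∑' i : ℕ, lvl g lam (i + (J+1)) t₂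
      = ∑' i : ℕ, (lvl g lam (i + (J+1)) t₁ - lvl g lam (i + (J+1)) t₂) :=
    (Summable.tsum_sub hs1 hs2).symm
  have h1 : ∀ i : ℕ, ‖lvl g lam (i + (J+1)) t₁ - lvl g lam (i + (J+1)) t₂‖
      ≤ bdf γ α M Cg Cstar (i + (J+1)) * (t₂ - t₁) ^ γ := fun i => by
    rw [Real.norm_eq_abs, abs_sub_comm]
    exact L2 hγ0 hγ hα0 hα1 hM hCg hCstar hgc hgb hg hlam h0 h12 h21
  have hsumR : Summable (fun i => bdf γ α M Cg Cstar (i + (J+1)) * (t₂ - t₁) ^ γ) :=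
    hbdshift.mul_right _
  have hsn : Summable (fun i => ‖lvl g lam (i + (J+1)) t₁ - lvl g lam (i + (J+1)) t₂‖) :=
    Summable.of_nonneg_of_le (fun i => norm_nonneg _) h1 hsumR
  rw [hsub]
  calc |∑' i : ℕ, (lvl g lam (i + (J+1)) t₁ - lvl g lam (i + (J+1)) t₂)|
      ≤ ∑' i : ℕ, ‖lvl g lam (i + (J+1)) t₁ - lvl g lam (i + (J+1)) t₂‖ := by
        rw [← Real.norm_eq_abs]; exact norm_tsum_le_tsum_norm hsn
    _ ≤ ∑' i : ℕ, bdf γ α M Cg Cstar (i + (J+1)) * (t₂ - t₁) ^ γ := Summable.tsum_le_tsum h1 hsn hsumR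
    _ = (∑' i : ℕ, bdf γ α M Cg Cstar (i + (J+1))) * (t₂ - t₁) ^ γ := tsum_mul_right
    _ ≤ ((Cstar * (Cg + 4*M) * Real.sqrt (1 + (J:ℝ)) * ((2:ℝ) ^ (-(th γ α))) ^ J) * CR γ α)
          * (t₂ - t₁) ^ γ :=
        mul_le_mul_of_nonneg_right (tail_le hγ0 hγ hα0 hM hCg hCstar J) hγΔ
    _ = _ := by ring

end tails

end St13

/-- Under the stated bounds on `g` and the coefficients `λ`, the Haar partial
sums `S_J` converge in `C^γ([0,1])` to some `S ∈ C^γ([0,1])`, at the geometric rate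
`‖S − S_J‖_{C^γ} ≤ D 2^{−J min(1/2−γ, α−1/2)} √(1+J)` for a constant `D > 0` depending only on
`M, C_g, C*, γ, α`. -/
theorem statement13 (γ : ℝ) (hγ0 : 0 ≤ γ) (hγ : γ < 1 / 2)
    (α : ℝ) (hα0 : 1 / 2 < α) (hα1 : α ≤ 1)
    (M Cg Cstar : ℝ) (hM : 0 ≤ M) (hCg : 0 ≤ Cg) (hCstar : 0 ≤ Cstar)
    (g : ℝ → ℝ) (hgb : ∀ s ∈ Set.Icc (0 : ℝ) 1, |g s| ≤ M)
    (hg : ∀ s₁ ∈ Set.Icc (0 : ℝ) 1, ∀ s₂ ∈ Set.Icc (0 : ℝ) 1,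
      |g s₁ - g s₂| ≤ Cg * |s₁ - s₂| ^ α)
    (lam00 : ℝ) (hlam00 : |lam00| ≤ Cstar)
    (lam : ℕ → ℕ → ℝ)
    (hlam : ∀ j k : ℕ, k < 2 ^ j → |lam j k| ≤ Cstar * Real.sqrt (1 + (j : ℝ))) :
    ∃ (S : ℝ → ℝ) (D : ℝ), 0 < D ∧
      ContinuousOn S (Set.Icc (0 : ℝ) 1) ∧
      (∃ C : ℝ, ∀ t₁ ∈ Set.Icc (0 : ℝ) 1, ∀ t₂ ∈ Set.Icc (0 : ℝ) 1,
        |S t₁ - S t₂| ≤ C * |t₁ - t₂| ^ γ) ∧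
      Filter.Tendsto
        (fun J => holderNorm γ (fun t => S t - haarPartialSum g lam00 lam J t))
        Filter.atTop (nhds 0) ∧
      ∀ J : ℕ,
        holderNorm γ (fun t => S t - haarPartialSum g lam00 lam J t) ≤
          D * 2 ^ (-(J : ℝ) * min (1 / 2 - γ) (α - 1 / 2)) *
            Real.sqrt (1 + (J : ℝ)) := by
  classical
  have hα0' : 0 < α := by linarith
  have hgc : ContinuousOn g (Icc (0:ℝ) 1) := St13.cont_g hα0' hCg hg
  have hgi : IntegrableOn g (Icc (0:ℝ) 1) := hgc.integrableOn_Icc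
  have hbdsum : Summable (St13.bdf γ α M Cg Cstar) :=
    St13.bdf_summable hγ0 hγ hα0 hM hCg hCstar
  have hr0 : (0:ℝ) < (2:ℝ) ^ (-(St13.th γ α)) := St13.r_pos γ α
  -- summability of levels
  have hsumlvl : ∀ t ∈ Icc (0:ℝ) 1, Summable (fun j => St13.lvl g lam j t) := fun t ht =>
    Summable.of_norm_bounded hbdsum (fun j => by
      rw [Real.norm_eq_abs]
      exact St13.L1 hγ0 hγ hα0 hα1 hM hCg hCstar hgc hgb hg hlam ht)
  -- the limit function
  set S : ℝ → ℝ := fun t => lam00 * St13.Phi g t + ∑' j, St13.lvl g lam j t with hSdef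
  have hPS : ∀ (J : ℕ) (t : ℝ), haarPartialSum g lam00 lam J t
      = lam00 * St13.Phi g t + ∑ j ∈ Finset.range (J+1), St13.lvl g lam j t :=
    fun J t => rfl
  have hdiffeq : ∀ (J : ℕ), ∀ t ∈ Icc (0:ℝ) 1,
      S t - haarPartialSum g lam00 lam J t = ∑' i : ℕ, St13.lvl g lam (i + (J+1)) t := by
    intro J t ht
    have h := Summable.sum_add_tsum_nat_add (f := fun j => St13.lvl g lam j t) (J+1) (hsumlvl t ht)
    rw [hPS, hSdef]
    simp only
    linarith
  -- tail bound function
  set C0 : ℝ := Cstar * (Cg + 4*M) * St13.CR γ α with hC0def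
  have hC00 : 0 ≤ C0 := by
    rw [hC0def]
    have := St13.CR_nonneg γ α
    positivity
  set TB : ℕ → ℝ := fun J =>
    C0 * (Real.sqrt (1 + (J:ℝ)) * ((2:ℝ) ^ (-(St13.th γ α))) ^ J) with hTBdef
  have hTBnn : ∀ J, 0 ≤ TB J := by
    intro J
    simp only [hTBdef]
    have h1 := Real.sqrt_nonneg (1 + (J:ℝ))
    have h2 : (0:ℝ) ≤ ((2:ℝ) ^ (-(St13.th γ α))) ^ J := pow_nonneg hr0.le J
    positivity
  have htail_abs : ∀ (J : ℕ), ∀ t ∈ Icc (0:ℝ) 1,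
      |S t - haarPartialSum g lam00 lam J t| ≤ TB J := by
    intro J t ht
    rw [hdiffeq J t ht, hTBdef]
    exact St13.tail_abs hγ0 hγ hα0 hα1 hM hCg hCstar hgc hgb hg hlam J ht
  have htail_holder : ∀ (J : ℕ), ∀ t₁ t₂ : ℝ, 0 ≤ t₁ → t₁ < t₂ → t₂ ≤ 1 →
      |(S t₁ - haarPartialSum g lam00 lam J t₁) - (S t₂ - haarPartialSum g lam00 lam J t₂)|
        ≤ TB J * (t₂ - t₁) ^ γ := by
    intro J t₁ t₂ h0 h12 h21
    rw [hdiffeq J t₁ ⟨h0, by linarith⟩, hdiffeq J t₂ ⟨by linarith, h21⟩, hTBdef]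
    have := St13.tail_holder hγ0 hγ hα0 hα1 hM hCg hCstar hgc hgb hg hlam J h0 h12 h21
    calc |(∑' i : ℕ, St13.lvl g lam (i + (J+1)) t₁) - ∑' i : ℕ, St13.lvl g lam (i + (J+1)) t₂|
        ≤ Cstar * (Cg + 4*M) * St13.CR γ α *
            (Real.sqrt (1 + (J:ℝ)) * ((2:ℝ) ^ (-(St13.th γ α))) ^ J) * (t₂ - t₁) ^ γ := this
      _ = _ := by ring
  -- bound on the Hölder norm
  have hholder_le : ∀ J : ℕ,
      holderNorm γ (fun t => S t - haarPartialSum g lam00 lam J t) ≤ 2 * TB J := by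
    intro J
    unfold holderNorm
    have s1 : sSup ((fun t => |S t - haarPartialSum g lam00 lam J t|) '' Icc (0:ℝ) 1)
        ≤ TB J := by
      apply Real.sSup_le _ (hTBnn J)
      rintro x ⟨t, ht, rfl⟩
      exact htail_abs J t ht
    have s2 : sSup {q : ℝ | ∃ t₁ t₂ : ℝ, 0 ≤ t₁ ∧ t₁ < t₂ ∧ t₂ ≤ 1 ∧
        q = |(S t₁ - haarPartialSum g lam00 lam J t₁) -
          (S t₂ - haarPartialSum g lam00 lam J t₂)| / (t₂ - t₁) ^ γ} ≤ TB J := by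
      apply Real.sSup_le _ (hTBnn J)
      rintro q ⟨t₁, t₂, h0, h12, h21, rfl⟩
      rw [div_le_iff₀ (Real.rpow_pos_of_pos (by linarith) γ)]
      exact htail_holder J t₁ t₂ h0 h12 h21
    calc sSup _ + sSup _ ≤ TB J + TB J := add_le_add s1 s2
      _ = 2 * TB J := by ring
  have hholder_nn : ∀ J : ℕ,
      0 ≤ holderNorm γ (fun t => S t - haarPartialSum g lam00 lam J t) := by
    intro J
    unfold holderNorm
    apply add_nonneg
    · apply Real.sSup_nonneg
      rintro x ⟨t, _, rfl⟩
      exact abs_nonneg _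
    · apply Real.sSup_nonneg
      rintro q ⟨t₁, t₂, h0, h12, h21, rfl⟩
      exact div_nonneg (abs_nonneg _) (Real.rpow_nonneg (by linarith) _)
  -- conversion of the exponent
  have hconv : ∀ J : ℕ, (2:ℝ) ^ (-(J : ℝ) * min (1 / 2 - γ) (α - 1 / 2))
      = ((2:ℝ) ^ (-(St13.th γ α))) ^ J := by
    intro J
    rw [St13.hr γ α J]
    rfl
  set D : ℝ := 2 * C0 + 1 with hDdef
  have hD0 : 0 < D := by rw [hDdef]; linarith
  have hfinal : ∀ J : ℕ,
      holderNorm γ (fun t => S t - haarPartialSum g lam00 lam J t) ≤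
        D * 2 ^ (-(J : ℝ) * min (1 / 2 - γ) (α - 1 / 2)) * Real.sqrt (1 + (J : ℝ)) := by
    intro J
    have h1 := hholder_le J
    have h2 : 2 * TB J ≤ D * 2 ^ (-(J : ℝ) * min (1 / 2 - γ) (α - 1 / 2)) *
        Real.sqrt (1 + (J : ℝ)) := by
      rw [hconv J]
      show 2 * (C0 * (Real.sqrt (1 + (J:ℝ)) * ((2:ℝ) ^ (-(St13.th γ α))) ^ J))
        ≤ (2 * C0 + 1) * ((2:ℝ) ^ (-(St13.th γ α))) ^ J * Real.sqrt (1 + (J:ℝ))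
      have hs := Real.sqrt_nonneg (1 + (J:ℝ))
      have hp : (0:ℝ) ≤ ((2:ℝ) ^ (-(St13.th γ α))) ^ J := pow_nonneg hr0.le J
      nlinarith [mul_nonneg hp hs]
    linarith
  -- the squeeze limit
  have hsq : Filter.Tendsto
      (fun J : ℕ => D * 2 ^ (-(J : ℝ) * min (1 / 2 - γ) (α - 1 / 2)) *
        Real.sqrt (1 + (J : ℝ))) Filter.atTop (nhds 0) := by
    apply squeeze_zero (fun J => ?_) (g := fun J : ℕ =>
      D * (((J:ℝ) + 2) * ((2:ℝ) ^ (-(St13.th γ α))) ^ J)) (fun J => ?_)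
    · exact (St13.aux_summable hγ0 hγ hα0 D).tendsto_atTop_zero
    · have hp : (0:ℝ) ≤ (2:ℝ) ^ (-(J : ℝ) * min (1 / 2 - γ) (α - 1 / 2)) :=
        Real.rpow_nonneg (by norm_num) _
      have hs := Real.sqrt_nonneg (1 + (J:ℝ))
      positivity
    · rw [hconv J]
      show D * ((2:ℝ) ^ (-(St13.th γ α))) ^ J * Real.sqrt (1 + (J:ℝ))
        ≤ D * (((J:ℝ) + 2) * ((2:ℝ) ^ (-(St13.th γ α))) ^ J)
      have hp : (0:ℝ) ≤ ((2:ℝ) ^ (-(St13.th γ α))) ^ J := pow_nonneg hr0.le J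
      have hs : Real.sqrt (1 + (J:ℝ)) ≤ (J:ℝ) + 2 := by
        have h1 : (1:ℝ) ≤ 1 + (J:ℝ) := by linarith [Nat.cast_nonneg (α := ℝ) J]
        have := St13.sqrt_le_self' h1
        linarith
      have := mul_le_mul_of_nonneg_left hs hp
      nlinarith [hD0.le, mul_nonneg hp (Real.sqrt_nonneg (1 + (J:ℝ)))]
  have htendsto : Filter.Tendsto
      (fun J => holderNorm γ (fun t => S t - haarPartialSum g lam00 lam J t))
      Filter.atTop (nhds 0) := squeeze_zero hholder_nn hfinal hsq
  -- continuity of S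
  have hPScont : ∀ J : ℕ, Continuous (fun t => haarPartialSum g lam00 lam J t) := by
    intro J
    have : (fun t => haarPartialSum g lam00 lam J t)
        = fun t => lam00 * St13.Phi g t + ∑ j ∈ Finset.range (J+1), St13.lvl g lam j t :=
      funext (hPS J)
    rw [this]
    exact (continuous_const.mul (St13.phi_cont hgi)).add
      (continuous_finset_sum _ (fun j _ => St13.lvl_cont hgi))
  have hTBtend : Filter.Tendsto TB Filter.atTop (nhds 0) := by
    apply squeeze_zero hTBnn (g := fun J : ℕ =>
      C0 * (((J:ℝ) + 2) * ((2:ℝ) ^ (-(St13.th γ α))) ^ J)) (fun J => ?_)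
    · exact (St13.aux_summable hγ0 hγ hα0 C0).tendsto_atTop_zero
    · show C0 * (Real.sqrt (1 + (J:ℝ)) * ((2:ℝ) ^ (-(St13.th γ α))) ^ J)
        ≤ C0 * (((J:ℝ) + 2) * ((2:ℝ) ^ (-(St13.th γ α))) ^ J)
      have hp : (0:ℝ) ≤ ((2:ℝ) ^ (-(St13.th γ α))) ^ J := pow_nonneg hr0.le J
      have hs : Real.sqrt (1 + (J:ℝ)) ≤ (J:ℝ) + 2 := by
        have h1 : (1:ℝ) ≤ 1 + (J:ℝ) := by linarith [Nat.cast_nonneg (α := ℝ) J]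
        have := St13.sqrt_le_self' h1
        linarith
      apply mul_le_mul_of_nonneg_left _ hC00
      exact mul_le_mul_of_nonneg_right hs hp
  have hunif : TendstoUniformlyOn (fun J t => haarPartialSum g lam00 lam J t) S
      Filter.atTop (Icc (0:ℝ) 1) := by
    rw [Metric.tendstoUniformlyOn_iff]
    intro ε hε
    filter_upwards [hTBtend.eventually (gt_mem_nhds hε)] with J hJ t ht
    rw [Real.dist_eq]
    calc |S t - haarPartialSum g lam00 lam J t| ≤ TB J := htail_abs J t ht
      _ < ε := hJ
  have hScont : ContinuousOn S (Icc (0:ℝ) 1) :=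
    hunif.continuousOn (Filter.Eventually.of_forall (fun J => (hPScont J).continuousOn)).frequently
  -- Hölder continuity of S
  have hkey : ∀ t₁ t₂ : ℝ, 0 ≤ t₁ → t₁ < t₂ → t₂ ≤ 1 →
      |S t₁ - S t₂| ≤ (|lam00| * M + St13.bdf γ α M Cg Cstar 0 + TB 0) * (t₂ - t₁) ^ γ := by
    intro t₁ t₂ h0 h12 h21
    have hΔ0 : (0:ℝ) < t₂ - t₁ := by linarith
    have hΔ1 : t₂ - t₁ ≤ 1 := by linarith
    have hγΔ : (0:ℝ) ≤ (t₂ - t₁) ^ γ := Real.rpow_nonneg hΔ0.le _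
    have hΔle : t₂ - t₁ ≤ (t₂ - t₁) ^ γ := by
      have := Real.rpow_le_rpow_of_exponent_ge hΔ0 hΔ1 (le_of_lt (by linarith : γ < 1))
      rwa [Real.rpow_one] at this
    have e : S t₁ - S t₂ =
        (lam00 * (St13.Phi g t₁ - St13.Phi g t₂) + (St13.lvl g lam 0 t₁ - St13.lvl g lam 0 t₂))
          + ((S t₁ - haarPartialSum g lam00 lam 0 t₁) - (S t₂ - haarPartialSum g lam00 lam 0 t₂)) := by
      rw [hPS 0 t₁, hPS 0 t₂]
      norm_num [Finset.sum_range_one]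
      ring
    have b1 : |lam00 * (St13.Phi g t₁ - St13.Phi g t₂)| ≤ |lam00| * M * (t₂ - t₁) ^ γ := by
      rw [abs_mul, abs_sub_comm]
      have := St13.phi_lip hM hgb hgi t₁ t₂ h12.le
      calc |lam00| * |St13.Phi g t₂ - St13.Phi g t₁| ≤ |lam00| * (M * (t₂ - t₁)) :=
            mul_le_mul_of_nonneg_left this (abs_nonneg _)
        _ ≤ |lam00| * (M * (t₂ - t₁) ^ γ) := by
            apply mul_le_mul_of_nonneg_left _ (abs_nonneg _)
            exact mul_le_mul_of_nonneg_left hΔle hM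
        _ = |lam00| * M * (t₂ - t₁) ^ γ := by ring
    have b2 : |St13.lvl g lam 0 t₁ - St13.lvl g lam 0 t₂|
        ≤ St13.bdf γ α M Cg Cstar 0 * (t₂ - t₁) ^ γ := by
      rw [abs_sub_comm]
      exact St13.L2 hγ0 hγ hα0 hα1 hM hCg hCstar hgc hgb hg hlam h0 h12 h21
    have b3 := htail_holder 0 t₁ t₂ h0 h12 h21
    calc |S t₁ - S t₂| ≤ |lam00 * (St13.Phi g t₁ - St13.Phi g t₂)
          + (St13.lvl g lam 0 t₁ - St13.lvl g lam 0 t₂)|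
        + |(S t₁ - haarPartialSum g lam00 lam 0 t₁) - (S t₂ - haarPartialSum g lam00 lam 0 t₂)| := by
          rw [e]; exact abs_add_le _ _
      _ ≤ (|lam00 * (St13.Phi g t₁ - St13.Phi g t₂)|
            + |St13.lvl g lam 0 t₁ - St13.lvl g lam 0 t₂|) + TB 0 * (t₂ - t₁) ^ γ := by
          have := abs_add_le (lam00 * (St13.Phi g t₁ - St13.Phi g t₂))
            (St13.lvl g lam 0 t₁ - St13.lvl g lam 0 t₂)
          linarith
      _ ≤ (|lam00| * M * (t₂ - t₁) ^ γ + St13.bdf γ α M Cg Cstar 0 * (t₂ - t₁) ^ γ)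
            + TB 0 * (t₂ - t₁) ^ γ := by linarith
      _ = (|lam00| * M + St13.bdf γ α M Cg Cstar 0 + TB 0) * (t₂ - t₁) ^ γ := by ring
  have hHolderS : ∃ C : ℝ, ∀ t₁ ∈ Set.Icc (0 : ℝ) 1, ∀ t₂ ∈ Set.Icc (0 : ℝ) 1,
      |S t₁ - S t₂| ≤ C * |t₁ - t₂| ^ γ := by
    refine ⟨|lam00| * M + St13.bdf γ α M Cg Cstar 0 + TB 0, ?_⟩
    have hCnn : 0 ≤ |lam00| * M + St13.bdf γ α M Cg Cstar 0 + TB 0 := by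
      have h1 := St13.bdf_nonneg (γ := γ) (α := α) hM hCg hCstar 0
      have h2 := hTBnn 0
      have h3 : 0 ≤ |lam00| * M := mul_nonneg (abs_nonneg _) hM
      linarith
    intro t₁ ht₁ t₂ ht₂
    rcases lt_trichotomy t₁ t₂ with h | h | h
    · have := hkey t₁ t₂ ht₁.1 h ht₂.2
      rwa [abs_sub_comm t₁ t₂, abs_of_pos (by linarith : (0:ℝ) < t₂ - t₁)]
    · rw [h]
      simp only [sub_self, abs_zero]
      have : (0:ℝ) ≤ |t₂ - t₂| ^ γ := Real.rpow_nonneg (abs_nonneg _) _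
      positivity
    · have := hkey t₂ t₁ ht₂.1 h ht₁.2
      rw [abs_sub_comm] at this
      rwa [abs_of_pos (by linarith : (0:ℝ) < t₁ - t₂)]
  exact ⟨S, D, hD0, hScont, hHolderS, htendsto, hfinal⟩
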